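/- arXiv:1406.2438 — 4 statements merged into one kernel-verified Lean document; each statement's English description precedes it below -/
import Mathlib

section
/- Every connected cubic graph of order n has an induced 2-regular subgraph of order at least (n + 2)/4. -/
open SimpleGraph

/-- `c` is an induced cycle of `G`. -/
def IsInducedCycle {V : Type*} (G : SimpleGraph V) {v : V} (c : G.Walk v v) : Prop :=
  c.IsCycle ∧ ∀ x ∈ c.support, ∀ y ∈ c.support, G.Adj x y → s(x, y) ∈ c.edges

/-- `G` has no induced cycle of length more than `k`. -/
def KChordal {V : Type*} (G : SimpleGraph V) (k : ℕ) : Prop :=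
  ∀ (v : V) (c : G.Walk v v), IsInducedCycle G c → c.length ≤ k

/-- The induced subgraph on `s` is 2-regular. -/
def TwoRegularInduced {V : Type*} (G : SimpleGraph V) (s : Set V) : Prop :=
  ∀ v ∈ s, (s ∩ G.neighborSet v).ncard = 2

namespace StmtAux

variable {V : Type*} {G : SimpleGraph V}

/-- If a path starts at `y` via `cons h q` and contains an edge `s(a, y)`,
then `a` is the second vertex. -/
lemma edge_start {y b x a : V} (h : G.Adj y b) (q : G.Walk b x)
    (hp : (SimpleGraph.Walk.cons h q).IsPath)
    (ha : s(a, y) ∈ (SimpleGraph.Walk.cons h q).edges) : a = b := by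
  rw [SimpleGraph.Walk.edges_cons, List.mem_cons] at ha
  rcases ha with ha | ha
  · rw [Sym2.eq_iff] at ha
    rcases ha with ⟨rfl, rfl⟩ | ⟨rfl, -⟩
    · exact absurd rfl h.ne
    · rfl
  · exfalso
    have hy : y ∈ q.support := SimpleGraph.Walk.snd_mem_support_of_mem_edges q ha
    rw [SimpleGraph.Walk.cons_isPath_iff] at hp
    exact hp.2 hy

/-- The end vertex is not in the support of a proper prefix of a path. -/

lemma not_mem_takeUntil [DecidableEq V] {b v x : V} {r : G.Walk b v} (hr : r.IsPath)
    (hx : x ∈ r.support) (hxv : x ≠ v) : v ∉ (r.takeUntil x hx).support := by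
  have hspec := r.take_spec hx
  have hnodup : r.support.Nodup := hr.support_nodup
  have hsupp : (r.takeUntil x hx).support ++ (r.dropUntil x hx).support.tail = r.support := by
    rw [← SimpleGraph.Walk.support_append, hspec]
  rw [← hsupp] at hnodup
  have hvmem : v ∈ (r.dropUntil x hx).support.tail := by
    have hvend : v ∈ (r.dropUntil x hx).support := SimpleGraph.Walk.end_mem_support _
    rw [(r.dropUntil x hx).support_eq_cons] at hvend
    rcases hvend with _ | h
    · exact absurd rfl hxv.symm
    · assumption
  intro hvmem'
  exact (List.disjoint_of_nodup_append hnodup) hvmem' hvmem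

lemma length_rotate' [DecidableEq V] {v u : V} (c : G.Walk v v) (h : u ∈ c.support) :
    (c.rotate u h).length = c.length := by
  have hspec := congrArg SimpleGraph.Walk.length (c.take_spec h)
  rw [SimpleGraph.Walk.length_append] at hspec
  simp only [SimpleGraph.Walk.rotate, SimpleGraph.Walk.length_append]
  omega

lemma mem_support_of_closed {v x : V} (c : G.Walk v v) (hc : c ≠ SimpleGraph.Walk.nil) :
    x ∈ c.support ↔ x ∈ c.support.tail := by
  cases c with
  | nil => exact absurd rfl hc
  | cons h q =>
    simp only [SimpleGraph.Walk.support_cons, List.tail_cons, List.mem_cons]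
    constructor
    · rintro (rfl | hx)
      · exact SimpleGraph.Walk.end_mem_support q
      · exact hx
    · intro hx; exact Or.inr hx

lemma mem_support_rotate [DecidableEq V] {v u x : V} {c : G.Walk v v} (hc : c.IsCycle)
    (h : u ∈ c.support) : (x ∈ (c.rotate u h).support) ↔ x ∈ c.support := by
  rw [mem_support_of_closed _ (hc.rotate h).ne_nil, mem_support_of_closed _ hc.ne_nil]
  exact (SimpleGraph.Walk.support_rotate c u h).mem_iff

lemma cycle_exact_two [DecidableEq V] {A : Set V} {v : V} (c : G.Walk v v) (hc : c.IsCycle)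
    (hsup : ∀ x ∈ c.support, x ∈ A)
    (hmin : ∀ (z : V) (w : G.Walk z z), w.IsCycle → (∀ x ∈ w.support, x ∈ A) →
      c.length ≤ w.length) :
    ∃ b d : V, b ≠ d ∧ ({x | x ∈ c.support} ∩ G.neighborSet v) = {b, d} := by
  have h3 := hc.three_le_length
  cases c with
  | nil => simp at h3
  | cons h r =>
    rename_i b
    -- h : G.Adj v b, r : G.Walk b v
    rw [SimpleGraph.Walk.cons_isCycle_iff] at hc
    obtain ⟨hrpath, hebv⟩ := hc
    have hrevpath : r.reverse.IsPath := hrpath.reverse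
    have hbv : b ≠ v := h.ne'
    obtain ⟨d, h2, t, ht⟩ := SimpleGraph.Walk.exists_eq_cons_of_ne hbv.symm r.reverse
    -- h2 : G.Adj v d, t : G.Walk d b, ht : r.reverse = cons h2 t
    have hdv : d ≠ v := h2.ne'
    have hrlen : r.length + 1 = (SimpleGraph.Walk.cons h r).length := by
      simp [SimpleGraph.Walk.length_cons]
    have hbd : b ≠ d := by
      rintro rfl
      have htpath : t.IsPath := by
        rw [ht, SimpleGraph.Walk.cons_isPath_iff] at hrevpath
        exact hrevpath.1
      have := (SimpleGraph.Walk.isPath_iff_eq_nil (p := t)).mp htpath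
      subst this
      have : r.reverse.length = 1 := by rw [ht]; simp
      rw [SimpleGraph.Walk.length_reverse] at this
      simp [SimpleGraph.Walk.length_cons] at h3
      omega
    have hdmem : d ∈ r.support := by
      have : d ∈ r.reverse.support := by
        rw [ht]; simp [SimpleGraph.Walk.support_cons]
      rwa [SimpleGraph.Walk.support_reverse, List.mem_reverse] at this
    have hmain : ∀ x, x ∈ (SimpleGraph.Walk.cons h r).support → G.Adj v x → x = b ∨ x = d := by
      intro x hxs hadj
      by_contra hcon
      push_neg at hcon
      obtain ⟨hxb, hxd⟩ := hcon
      have hxv : x ≠ v := hadj.ne'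
      have hxr : x ∈ r.support := by
        rw [SimpleGraph.Walk.support_cons, List.mem_cons] at hxs
        rcases hxs with rfl | hxs
        · exact absurd rfl hxv
        · exact hxs
      set r1 := r.takeUntil x hxr with hr1
      set r2 := r.dropUntil x hxr with hr2
      have hr1path : r1.IsPath := hrpath.takeUntil hxr
      have hr2path : r2.IsPath := hrpath.dropUntil hxr
      have hvnotr1 : v ∉ r1.support := not_mem_takeUntil hrpath hxr hxv
      -- second cycle: v → x → ... → v
      have hcyc2 : (SimpleGraph.Walk.cons hadj r2).IsCycle := by
        rw [SimpleGraph.Walk.cons_isCycle_iff]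
        refine ⟨hr2path, fun hmem => ?_⟩
        have hmem' : s(v, x) ∈ r.edges := SimpleGraph.Walk.edges_dropUntil_subset r hxr hmem
        have hmem'' : s(x, v) ∈ r.reverse.edges := by
          rw [SimpleGraph.Walk.edges_reverse, List.mem_reverse, Sym2.eq_swap]
          exact hmem'
        rw [ht] at hmem''
        have := edge_start h2 t (ht ▸ hrevpath) hmem''
        exact hxd this
      have hcyc2sup : ∀ y ∈ (SimpleGraph.Walk.cons hadj r2).support, y ∈ A := by
        intro y hy
        rw [SimpleGraph.Walk.support_cons, List.mem_cons] at hy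
        rcases hy with rfl | hy
        · exact hsup _ (SimpleGraph.Walk.start_mem_support _)
        · apply hsup
          rw [SimpleGraph.Walk.support_cons, List.mem_cons]
          exact Or.inr (SimpleGraph.Walk.support_dropUntil_subset r hxr hy)
      have hlen2 := hmin _ _ hcyc2 hcyc2sup
      -- first cycle: v → b → ... → x → v
      have hconcatpath : (r1.concat hadj.symm).IsPath := by
        rw [← SimpleGraph.Walk.isPath_reverse_iff, SimpleGraph.Walk.reverse_concat,
          SimpleGraph.Walk.cons_isPath_iff]
        refine ⟨hr1path.reverse, fun hmem => ?_⟩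
        rw [SimpleGraph.Walk.support_reverse, List.mem_reverse] at hmem
        exact hvnotr1 hmem
      have hcyc1 : (SimpleGraph.Walk.cons h (r1.concat hadj.symm)).IsCycle := by
        rw [SimpleGraph.Walk.cons_isCycle_iff]
        refine ⟨hconcatpath, fun hmem => ?_⟩
        rw [SimpleGraph.Walk.edges_concat, List.concat_eq_append, List.mem_append, List.mem_singleton] at hmem
        rcases hmem with hmem | hmem
        · exact hebv (SimpleGraph.Walk.edges_takeUntil_subset r hxr hmem)
        · rw [Sym2.eq_iff] at hmem
          rcases hmem with ⟨h1, -⟩ | ⟨-, h1⟩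
          · exact hxv h1.symm
          · exact hxb h1.symm
      have hcyc1sup : ∀ y ∈ (SimpleGraph.Walk.cons h (r1.concat hadj.symm)).support, y ∈ A := by
        intro y hy
        rw [SimpleGraph.Walk.support_cons, List.mem_cons] at hy
        rcases hy with rfl | hy
        · exact hsup _ (SimpleGraph.Walk.start_mem_support _)
        · rw [SimpleGraph.Walk.support_concat, List.mem_append,
            List.mem_singleton] at hy
          rcases hy with hy | rfl
          · apply hsup
            rw [SimpleGraph.Walk.support_cons, List.mem_cons]
            exact Or.inr (SimpleGraph.Walk.support_takeUntil_subset r hxr hy)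
          · exact hsup _ (SimpleGraph.Walk.start_mem_support _)
      have hlen1 := hmin _ _ hcyc1 hcyc1sup
      have hsum : r1.length + r2.length = r.length := by
        have := congrArg SimpleGraph.Walk.length (r.take_spec hxr)
        rw [SimpleGraph.Walk.length_append] at this
        exact this
      simp only [SimpleGraph.Walk.length_cons, SimpleGraph.Walk.length_concat] at hlen1 hlen2 h3
      omega
    refine ⟨b, d, hbd, ?_⟩
    ext x
    simp only [Set.mem_inter_iff, Set.mem_setOf_eq, SimpleGraph.mem_neighborSet,
      Set.mem_insert_iff, Set.mem_singleton_iff]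
    constructor
    · rintro ⟨hxs, hadj⟩
      exact hmain x hxs hadj
    · rintro (rfl | rfl)
      · refine ⟨?_, h⟩
        rw [SimpleGraph.Walk.support_cons, List.mem_cons]
        exact Or.inr (SimpleGraph.Walk.start_mem_support r)
      · refine ⟨?_, h2⟩
        rw [SimpleGraph.Walk.support_cons, List.mem_cons]
        exact Or.inr hdmem

lemma exists_exact_two [Fintype V] [DecidableEq V] {A : Set V} (hA : A.Nonempty)
    (hdeg : ∀ v ∈ A, 2 ≤ (A ∩ G.neighborSet v).ncard) :
    ∃ c : Set V, c.Nonempty ∧ c ⊆ A ∧ ∀ v ∈ c, (c ∩ G.neighborSet v).ncard = 2 := by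
  -- Step 1: there exists a cycle with support in A
  have hcycle : ∃ (z : V) (w : G.Walk z z), w.IsCycle ∧ ∀ x ∈ w.support, x ∈ A := by
    set S : Set ℕ :=
      {n | ∃ (x y : V) (p : G.Walk x y), p.IsPath ∧ (∀ a ∈ p.support, a ∈ A) ∧ p.length = n}
      with hS
    obtain ⟨a, ha⟩ := hA
    have hSne : S.Nonempty := by
      refine ⟨0, a, a, SimpleGraph.Walk.nil, SimpleGraph.Walk.IsPath.nil, ?_, rfl⟩
      intro x hx
      simp only [SimpleGraph.Walk.support_nil, List.mem_singleton] at hx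
      subst hx; exact ha
    have hSbdd : BddAbove S := by
      refine ⟨Fintype.card V, fun n hn => ?_⟩
      obtain ⟨x, y, p, hp, -, rfl⟩ := hn
      exact hp.length_lt.le
    obtain ⟨x, y, p, hp, hpa, hplen⟩ := Nat.sSup_mem hSne hSbdd
    -- all A-neighbors of y lie on p
    have hnb : ∀ w, w ∈ A ∩ G.neighborSet y → w ∈ p.support := by
      intro w hw
      by_contra hwp
      have hpath' : (p.concat (Set.mem_of_mem_inter_right hw)).IsPath := by
        rw [← SimpleGraph.Walk.isPath_reverse_iff, SimpleGraph.Walk.reverse_concat,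
          SimpleGraph.Walk.cons_isPath_iff]
        refine ⟨hp.reverse, fun hmem => ?_⟩
        rw [SimpleGraph.Walk.support_reverse, List.mem_reverse] at hmem
        exact hwp hmem
      have hmemS : p.length + 1 ∈ S := by
        refine ⟨x, w, p.concat (Set.mem_of_mem_inter_right hw), hpath', ?_, SimpleGraph.Walk.length_concat _ _⟩
        intro z hz
        rw [SimpleGraph.Walk.support_concat, List.mem_append,
          List.mem_singleton] at hz
        rcases hz with hz | rfl
        · exact hpa _ hz
        · exact hw.1
      have := le_csSup hSbdd hmemS
      omega
    have hyA : y ∈ A := hpa _ (SimpleGraph.Walk.end_mem_support p)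
    have hdegy := hdeg y hyA
    -- p is not a loop path
    have hxy : x ≠ y := by
      rintro rfl
      obtain ⟨w, hw, hwy⟩ := Set.exists_ne_of_one_lt_ncard (lt_of_lt_of_le one_lt_two hdegy) x
      have hws := hnb w hw
      rw [(SimpleGraph.Walk.isPath_iff_eq_nil (p := p)).mp hp] at hws
      simp only [SimpleGraph.Walk.support_nil, List.mem_singleton] at hws
      exact hwy hws
    obtain ⟨z, h1, q, hq⟩ := SimpleGraph.Walk.exists_eq_cons_of_ne (Ne.symm hxy) p.reverse
    obtain ⟨u, hu, huz⟩ := Set.exists_ne_of_one_lt_ncard (lt_of_lt_of_le one_lt_two hdegy) z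
    have hus : u ∈ p.support := hnb u hu
    have huy : u ≠ y := hu.2.ne'
    have hurev : u ∈ p.reverse.support := by
      rwa [SimpleGraph.Walk.support_reverse, List.mem_reverse]
    set w1 := p.reverse.takeUntil u hurev with hw1
    have hw1path : w1.IsPath := hp.reverse.takeUntil hurev
    have hadj : G.Adj u y := hu.2.symm
    refine ⟨u, SimpleGraph.Walk.cons hadj w1, ?_, ?_⟩
    · rw [SimpleGraph.Walk.cons_isCycle_iff]
      refine ⟨hw1path, fun hmem => ?_⟩
      have hmem' : s(u, y) ∈ p.reverse.edges :=
        SimpleGraph.Walk.edges_takeUntil_subset _ hurev hmem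
      rw [hq] at hmem'
      exact huz (edge_start h1 q (hq ▸ hp.reverse) hmem')
    · intro s hs
      rw [SimpleGraph.Walk.support_cons, List.mem_cons] at hs
      rcases hs with rfl | hs
      · exact hu.1
      · apply hpa
        have := SimpleGraph.Walk.support_takeUntil_subset _ hurev hs
        rwa [SimpleGraph.Walk.support_reverse, List.mem_reverse] at this
  -- Step 2: take a minimum length cycle with support in A
  set S2 : Set ℕ :=
    {n | ∃ (z : V) (w : G.Walk z z), w.IsCycle ∧ (∀ x ∈ w.support, x ∈ A) ∧ w.length = n}
    with hS2
  have hS2ne : S2.Nonempty := by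
    obtain ⟨z, w, hw, hwa⟩ := hcycle
    exact ⟨w.length, z, w, hw, hwa, rfl⟩
  obtain ⟨v, c, hc, hca, hclen⟩ := Nat.sInf_mem hS2ne
  have hmin : ∀ (z : V) (w : G.Walk z z), w.IsCycle → (∀ x ∈ w.support, x ∈ A) →
      c.length ≤ w.length := by
    intro z w hw hwa
    rw [hclen]
    exact Nat.sInf_le ⟨z, w, hw, hwa, rfl⟩
  refine ⟨{x | x ∈ c.support}, ⟨v, SimpleGraph.Walk.start_mem_support c⟩, hca, ?_⟩
  intro u hu
  have hus : u ∈ c.support := hu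
  set c' := c.rotate u hus with hc'
  have hc'cyc : c'.IsCycle := hc.rotate hus
  have hc'sup : ∀ x ∈ c'.support, x ∈ A := by
    intro x hx
    exact hca x ((mem_support_rotate hc hus).mp hx)
  have hc'min : ∀ (z : V) (w : G.Walk z z), w.IsCycle → (∀ x ∈ w.support, x ∈ A) →
      c'.length ≤ w.length := by
    intro z w hw hwa
    rw [length_rotate' c hus]
    exact hmin z w hw hwa
  obtain ⟨b, d, hbd, heq⟩ := cycle_exact_two c' hc'cyc hc'sup hc'min
  have hsets : ({x | x ∈ c.support} : Set V) = {x | x ∈ c'.support} := by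
    ext x
    exact (mem_support_rotate hc hus).symm
  rw [hsets, heq]
  exact Set.ncard_pair hbd

section Counting
variable [Fintype V] [DecidableEq V] [DecidableRel G.Adj]

/-- Double counting of edges between two finsets. -/
lemma sum_inter_comm (P Q : Finset V) :
    ∑ x ∈ P, (Q ∩ G.neighborFinset x).card = ∑ y ∈ Q, (P ∩ G.neighborFinset y).card := by
  have key : ∀ (P Q : Finset V), ∑ x ∈ P, (Q ∩ G.neighborFinset x).card
      = ∑ x ∈ P, ∑ y ∈ Q, (if G.Adj x y then 1 else 0) := by
    intro P Q
    refine Finset.sum_congr rfl fun x _ => ?_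
    have : Q ∩ G.neighborFinset x = Q.filter (fun y => G.Adj x y) := by
      ext y; simp [SimpleGraph.mem_neighborFinset]
    rw [this, Finset.card_filter]
  rw [key, key, Finset.sum_comm]
  refine Finset.sum_congr rfl fun x _ => Finset.sum_congr rfl fun y _ => ?_
  simp [G.adj_comm x y]

/-- In a set avoiding induced 2-regular subsets, every nonempty finite subset spans
fewer than its cardinality of edges (forest bound, doubled). -/

lemma forest_bound (F' : Finset V)
    (hno : ∀ c : Set V, c.Nonempty → c ⊆ ↑F' →
      ¬ (∀ v ∈ c, (c ∩ G.neighborSet v).ncard = 2)) :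
    ∀ A : Finset V, A ⊆ F' → A.Nonempty →
      (∑ x ∈ A, (A ∩ G.neighborFinset x).card) + 2 ≤ 2 * A.card := by
  intro A
  induction A using Finset.strongInductionOn with
  | _ A ih =>
  intro hAF hAne
  by_cases hmindeg : ∀ v ∈ A, 2 ≤ (A ∩ G.neighborFinset v).card
  · exfalso
    have hdeg : ∀ v ∈ (↑A : Set V), 2 ≤ ((↑A : Set V) ∩ G.neighborSet v).ncard := by
      intro v hv
      have : ((↑A : Set V) ∩ G.neighborSet v) = ↑(A ∩ G.neighborFinset v) := by
        rw [Finset.coe_inter, SimpleGraph.neighborFinset_def, Set.coe_toFinset]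
      rw [this, Set.ncard_coe_finset]
      exact hmindeg v hv
    obtain ⟨c, hcne, hcA, hc2⟩ := exists_exact_two (by exact_mod_cast hAne) hdeg
    exact hno c hcne (hcA.trans (Finset.coe_subset.mpr hAF)) hc2
  · push_neg at hmindeg
    obtain ⟨v, hvA, hvdeg⟩ := hmindeg
    have hvdeg' : (A ∩ G.neighborFinset v).card ≤ 1 := by omega
    set A' := A.erase v with hA'
    by_cases hA'ne : A'.Nonempty
    · have hihyp := ih A' (Finset.erase_ssubset hvA) ((Finset.erase_subset v A).trans hAF) hA'ne
      have hsplit : ∑ x ∈ A, (A ∩ G.neighborFinset x).card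
          = (∑ x ∈ A', (A ∩ G.neighborFinset x).card) + (A ∩ G.neighborFinset v).card := by
        rw [hA', Finset.sum_erase_add]
        exact hvA
      have hpoint : ∀ x ∈ A', (A ∩ G.neighborFinset x).card
          ≤ (A' ∩ G.neighborFinset x).card + (if x ∈ G.neighborFinset v then 1 else 0) := by
        intro x hxA'
        by_cases hvx : v ∈ G.neighborFinset x
        · have hsub : A ∩ G.neighborFinset x ⊆ insert v (A' ∩ G.neighborFinset x) := by
            intro y hy
            rw [Finset.mem_inter] at hy
            rcases eq_or_ne y v with rfl | hyv
            · exact Finset.mem_insert_self _ _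
            · exact Finset.mem_insert_of_mem
                (Finset.mem_inter.mpr ⟨Finset.mem_erase.mpr ⟨hyv, hy.1⟩, hy.2⟩)
          have hxv : x ∈ G.neighborFinset v := by
            rw [SimpleGraph.mem_neighborFinset] at hvx ⊢
            exact hvx.symm
          calc (A ∩ G.neighborFinset x).card ≤ (insert v (A' ∩ G.neighborFinset x)).card :=
                Finset.card_le_card hsub
            _ ≤ (A' ∩ G.neighborFinset x).card + 1 := Finset.card_insert_le _ _
            _ = (A' ∩ G.neighborFinset x).card + (if x ∈ G.neighborFinset v then 1 else 0) := by
                rw [if_pos hxv]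
        · have heq : A ∩ G.neighborFinset x = A' ∩ G.neighborFinset x := by
            ext y
            simp only [Finset.mem_inter, hA', Finset.mem_erase]
            constructor
            · rintro ⟨hyA, hyN⟩
              refine ⟨⟨?_, hyA⟩, hyN⟩
              rintro rfl
              exact hvx hyN
            · rintro ⟨⟨-, hyA⟩, hyN⟩
              exact ⟨hyA, hyN⟩
          rw [heq]
          exact Nat.le_add_right _ _
      have hsum' : ∑ x ∈ A', (A ∩ G.neighborFinset x).card
          ≤ (∑ x ∈ A', (A' ∩ G.neighborFinset x).card) + (A' ∩ G.neighborFinset v).card := by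
        calc ∑ x ∈ A', (A ∩ G.neighborFinset x).card
            ≤ ∑ x ∈ A', ((A' ∩ G.neighborFinset x).card
              + (if x ∈ G.neighborFinset v then 1 else 0)) := Finset.sum_le_sum hpoint
          _ = (∑ x ∈ A', (A' ∩ G.neighborFinset x).card)
              + ∑ x ∈ A', (if x ∈ G.neighborFinset v then 1 else 0) := by
                rw [Finset.sum_add_distrib]
          _ = (∑ x ∈ A', (A' ∩ G.neighborFinset x).card) + (A' ∩ G.neighborFinset v).card := by
                congr 1
                rw [← Finset.card_filter, Finset.filter_mem_eq_inter]
      have hA'v : (A' ∩ G.neighborFinset v).card ≤ 1 := by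
        refine le_trans (Finset.card_le_card ?_) hvdeg'
        exact Finset.inter_subset_inter_right (Finset.erase_subset v A)
      have hcard : A'.card + 1 = A.card := by
        rw [hA', Finset.card_erase_of_mem hvA]
        have := Finset.card_pos.mpr hAne
        omega
      omega
    · -- A = {v}
      rw [Finset.not_nonempty_iff_eq_empty] at hA'ne
      have hAv : A = {v} := by
        apply Finset.eq_singleton_iff_unique_mem.mpr
        refine ⟨hvA, fun y hy => ?_⟩
        by_contra hyv
        have : y ∈ A' := Finset.mem_erase.mpr ⟨hyv, hy⟩
        rw [hA'ne] at this
        exact absurd this (Finset.notMem_empty y)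
      subst hAv
      have : ({v} ∩ G.neighborFinset v : Finset V).card = 0 := by
        rw [Finset.card_eq_zero]
        ext y
        simp only [Finset.mem_inter, Finset.mem_singleton, SimpleGraph.mem_neighborFinset,
          Finset.notMem_empty, iff_false]
        rintro ⟨rfl, hadj⟩
        exact G.irrefl hadj
      simp [this]

end Counting

end StmtAux

theorem stmt4 {V : Type*} [Fintype V] (G : SimpleGraph V)
    (hconn : G.Connected) (hcubic : ∀ v : V, (G.neighborSet v).ncard = 3) :
    ∃ s : Set V, TwoRegularInduced G s ∧
      ((Fintype.card V : ℝ) + 2) / 4 ≤ (s.ncard : ℝ) := by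
  classical
  -- pick a two-regular induced set of maximum cardinality
  set 𝒮 : Finset (Finset V) := Finset.univ.filter (fun t => TwoRegularInduced G ↑t) with h𝒮
  have h𝒮ne : 𝒮.Nonempty := by
    refine ⟨∅, ?_⟩
    rw [h𝒮, Finset.mem_filter]
    exact ⟨Finset.mem_univ _, fun v hv => absurd hv (by simp)⟩
  obtain ⟨t0, ht0mem, ht0max⟩ := 𝒮.exists_max_image (fun t => t.card) h𝒮ne
  rw [h𝒮, Finset.mem_filter] at ht0mem
  have hs : TwoRegularInduced G ↑t0 := ht0mem.2
  set s : Set V := ↑t0 with hsdef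
  set W : Set V := {w | w ∉ s ∧ ∃ v ∈ s, G.Adj v w} with hW
  set Fs : Set V := {w | w ∉ s ∧ ∀ v ∈ s, ¬ G.Adj v w} with hFs
  -- no extension is possible
  have hno : ∀ c : Set V, c.Nonempty → c ⊆ Fs →
      ¬ (∀ v ∈ c, (c ∩ G.neighborSet v).ncard = 2) := by
    intro c hcne hcF hc2
    have hcfin : c.Finite := c.toFinite
    have hdisj : Disjoint s c := by
      rw [Set.disjoint_left]
      intro a ha hac
      exact (hcF hac).1 ha
    have hgood : TwoRegularInduced G (s ∪ c) := by
      intro v hv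
      rcases hv with hv | hv
      · have hcv : c ∩ G.neighborSet v = ∅ := by
          ext y
          simp only [Set.mem_inter_iff, SimpleGraph.mem_neighborSet, Set.mem_empty_iff_false,
            iff_false, not_and]
          intro hy hadj
          exact (hcF hy).2 v hv hadj
        rw [Set.union_inter_distrib_right, hcv, Set.union_empty]
        exact hs v hv
      · have hsv : s ∩ G.neighborSet v = ∅ := by
          ext y
          simp only [Set.mem_inter_iff, SimpleGraph.mem_neighborSet, Set.mem_empty_iff_false,
            iff_false, not_and]
          intro hy hadj
          exact (hcF hv).2 y hy hadj.symm
        rw [Set.union_inter_distrib_right, hsv, Set.empty_union]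
        exact hc2 v hv
    set t1 : Finset V := t0 ∪ hcfin.toFinset with ht1
    have ht1coe : (↑t1 : Set V) = s ∪ c := by
      rw [ht1, Finset.coe_union, hcfin.coe_toFinset, hsdef]
    have ht1mem : t1 ∈ 𝒮 := by
      rw [h𝒮, Finset.mem_filter]
      exact ⟨Finset.mem_univ _, ht1coe ▸ hgood⟩
    have hcard1 := ht0max t1 ht1mem
    have hcard2 : t1.card = s.ncard + c.ncard := by
      rw [← Set.ncard_coe_finset t1, ht1coe, Set.ncard_union_eq hdisj (s.toFinite) hcfin]
    have hcpos : 0 < c.ncard := (Set.ncard_pos hcfin).mpr hcne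
    have hscard : s.ncard = t0.card := Set.ncard_coe_finset t0
    omega
  -- Finset versions
  set WF : Finset V := Finset.univ.filter (fun w => w ∈ W) with hWF
  set FF : Finset V := Finset.univ.filter (fun w => w ∈ Fs) with hFF
  have hFFcoe : (↑FF : Set V) = Fs := by
    rw [hFF]; ext x; simp
  -- partition
  have hpart : (Fintype.card V : ℕ) ≤ t0.card + WF.card + FF.card := by
    have huniv : (Finset.univ : Finset V) ⊆ t0 ∪ WF ∪ FF := by
      intro x _
      by_cases hxs : x ∈ s
      · exact Finset.mem_union_left _ (Finset.mem_union_left _ hxs)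
      · by_cases hxw : ∃ v ∈ s, G.Adj v x
        · exact Finset.mem_union_left _ (Finset.mem_union_right _ (by
            rw [hWF, Finset.mem_filter]; exact ⟨Finset.mem_univ _, ⟨hxs, hxw⟩⟩))
        · refine Finset.mem_union_right _ ?_
          rw [hFF, Finset.mem_filter]
          push_neg at hxw
          exact ⟨Finset.mem_univ _, ⟨hxs, hxw⟩⟩
    calc Fintype.card V = (Finset.univ : Finset V).card := (Finset.card_univ).symm
      _ ≤ (t0 ∪ WF ∪ FF).card := Finset.card_le_card huniv
      _ ≤ (t0 ∪ WF).card + FF.card := Finset.card_union_le _ _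
      _ ≤ t0.card + WF.card + FF.card := by
          have := Finset.card_union_le t0 WF
          omega
  -- each vertex of s has exactly one neighbor outside s
  have houtside : ∀ v ∈ s, ∃ a, G.neighborSet v \ s = {a} := by
    intro v hv
    have h1 : (G.neighborSet v ∩ s).ncard + (G.neighborSet v \ s).ncard
        = (G.neighborSet v).ncard :=
      Set.ncard_inter_add_ncard_diff_eq_ncard _ _ (Set.toFinite _)
    have h2 : (G.neighborSet v ∩ s).ncard = 2 := by
      rw [Set.inter_comm]; exact hs v hv
    rw [h2, hcubic v] at h1
    have : (G.neighborSet v \ s).ncard = 1 := by omega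
    exact Set.ncard_eq_one.mp this
  -- W is small
  have hWsmall : WF.card ≤ t0.card := by
    set g : V → V := fun v => if h : ∃ a, G.neighborSet v \ s = {a} then h.choose else v with hg
    have hsub : WF ⊆ t0.image g := by
      intro w hw
      rw [hWF, Finset.mem_filter] at hw
      obtain ⟨-, hws, v, hvs, hadj⟩ := hw
      have hex := houtside v hvs
      have hgv : G.neighborSet v \ s = {g v} := by
        rw [hg]; simp only [dif_pos hex]; exact hex.choose_spec
      have : w ∈ G.neighborSet v \ s := ⟨hadj, hws⟩
      rw [hgv, Set.mem_singleton_iff] at this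
      subst this
      exact Finset.mem_image_of_mem g hvs
    calc WF.card ≤ (t0.image g).card := Finset.card_le_card hsub
      _ ≤ t0.card := Finset.card_image_le
  -- degrees split over FF
  have hdegsplit : ∀ v ∈ FF, (FF ∩ G.neighborFinset v).card + (WF ∩ G.neighborFinset v).card
      = 3 := by
    intro v hv
    rw [hFF, Finset.mem_filter] at hv
    obtain ⟨-, hvns, hvnadj⟩ := hv
    have hcover : G.neighborFinset v = (FF ∩ G.neighborFinset v) ∪ (WF ∩ G.neighborFinset v) := by
      ext y
      simp only [Finset.mem_union, Finset.mem_inter, SimpleGraph.mem_neighborFinset]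
      constructor
      · intro hadj
        have hyns : y ∉ s := by
          intro hys
          exact hvnadj y hys hadj.symm
        by_cases hyw : ∃ u ∈ s, G.Adj u y
        · refine Or.inr ⟨?_, hadj⟩
          rw [hWF, Finset.mem_filter]
          exact ⟨Finset.mem_univ _, hyns, hyw⟩
        · refine Or.inl ⟨?_, hadj⟩
          rw [hFF, Finset.mem_filter]
          push_neg at hyw
          exact ⟨Finset.mem_univ _, hyns, hyw⟩
      · rintro (⟨-, hadj⟩ | ⟨-, hadj⟩) <;> exact hadj
    have hdisj2 : Disjoint (FF ∩ G.neighborFinset v) (WF ∩ G.neighborFinset v) := by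
      rw [Finset.disjoint_left]
      intro a ha hb
      rw [Finset.mem_inter, hFF, Finset.mem_filter] at ha
      rw [Finset.mem_inter, hWF, Finset.mem_filter] at hb
      obtain ⟨u, hu, hadj⟩ := hb.1.2.2
      exact ha.1.2.2 u hu hadj
    have hdeg3 : (G.neighborFinset v).card = 3 := by
      have := hcubic v
      rwa [Set.ncard_eq_toFinset_card', ← SimpleGraph.neighborFinset_def] at this
    have hcu : (G.neighborFinset v).card
        = (FF ∩ G.neighborFinset v).card + (WF ∩ G.neighborFinset v).card := by
      conv_lhs => rw [hcover]
      rw [Finset.card_union_of_disjoint hdisj2]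
    omega
  -- each W vertex has at most 2 neighbors in FF
  have hWdeg : ∀ w ∈ WF, (FF ∩ G.neighborFinset w).card ≤ 2 := by
    intro w hw
    rw [hWF, Finset.mem_filter] at hw
    obtain ⟨-, hws, v, hvs, hadj⟩ := hw
    have hvFF : v ∉ FF := by
      rw [hFF, Finset.mem_filter]
      rintro ⟨-, hvns, -⟩
      exact hvns hvs
    have hsub : FF ∩ G.neighborFinset w ⊆ (G.neighborFinset w).erase v := by
      intro y hy
      rw [Finset.mem_inter] at hy
      refine Finset.mem_erase.mpr ⟨?_, hy.2⟩
      rintro rfl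
      exact hvFF hy.1
    have hdeg3 : (G.neighborFinset w).card = 3 := by
      have := hcubic w
      rwa [Set.ncard_eq_toFinset_card', ← SimpleGraph.neighborFinset_def] at this
    have hvmem : v ∈ G.neighborFinset w := by
      rw [SimpleGraph.mem_neighborFinset]; exact hadj.symm
    calc (FF ∩ G.neighborFinset w).card ≤ ((G.neighborFinset w).erase v).card :=
          Finset.card_le_card hsub
      _ = 2 := by rw [Finset.card_erase_of_mem hvmem, hdeg3]
  -- now combine
  have hkey : Fintype.card V + 2 ≤ 4 * t0.card := by
    by_cases hFFne : FF.Nonempty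
    · have hforest := StmtAux.forest_bound FF (by rw [hFFcoe]; exact hno) FF (subset_refl _) hFFne
      have hsum3 : ∑ v ∈ FF, ((FF ∩ G.neighborFinset v).card + (WF ∩ G.neighborFinset v).card)
          = 3 * FF.card := by
        rw [Finset.sum_congr rfl hdegsplit]
        simp [Finset.sum_const, mul_comm]
      rw [Finset.sum_add_distrib] at hsum3
      have hswap := StmtAux.sum_inter_comm (G := G) FF WF
      have hWbound : ∑ y ∈ WF, (FF ∩ G.neighborFinset y).card ≤ 2 * WF.card := by
        calc ∑ y ∈ WF, (FF ∩ G.neighborFinset y).card ≤ ∑ y ∈ WF, 2 :=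
              Finset.sum_le_sum hWdeg
          _ = 2 * WF.card := by rw [Finset.sum_const, smul_eq_mul, mul_comm]
      omega
    · rw [Finset.not_nonempty_iff_eq_empty] at hFFne
      have hFFcard : FF.card = 0 := by rw [hFFne]; rfl
      have ht0pos : 0 < t0.card := by
        rcases Finset.eq_empty_or_nonempty t0 with h | h
        · exfalso
          have : Nonempty V := hconn.nonempty
          obtain ⟨x⟩ := this
          have : x ∈ FF := by
            rw [hFF, Finset.mem_filter]
            refine ⟨Finset.mem_univ _, ?_, ?_⟩
            · rw [hsdef, h]; simp
            · intro v hv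
              rw [hsdef, h] at hv; simp at hv
          rw [hFFne] at this
          exact absurd this (Finset.notMem_empty x)
        · exact Finset.card_pos.mpr h
      omega
  refine ⟨s, hs, ?_⟩
  rw [div_le_iff₀ (by norm_num : (0:ℝ) < 4)]
  have hscard : s.ncard = t0.card := Set.ncard_coe_finset t0
  rw [hscard]
  have : (Fintype.card V : ℝ) + 2 ≤ 4 * t0.card := by exact_mod_cast hkey
  linarith
end

section
/- Every 2-connected graph in which some vertex and hence every vertex lies on an induced cycle, that is triangle-free, K_{2,3}-free (as induced subgraph), subcubic, and 4-chordal, and that contains an induced 4-cycle with a vertex of degree 3 having a neighbor outside the cycle, contains an induced subgraph isomorphic to B_3 = P2 □ P3. -/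
open SimpleGraph

/-- `G` has at least 3 vertices and stays connected after deleting any vertex. -/
def TwoConnected {V : Type*} (G : SimpleGraph V) : Prop :=
  3 ≤ Nat.card V ∧ ∀ v : V, (G.induce {w | w ≠ v}).Connected

/-- The diamond `D`: `K4` minus an edge. -/
def diamond : SimpleGraph (Fin 4) := (completeGraph (Fin 4)).deleteEdges {s(0, 1)}

/-- `D'`: the diamond plus a new vertex adjacent to its two degree-2 vertices. -/
def diamondPlus : SimpleGraph (Fin 5) :=
  SimpleGraph.fromRel (fun a b =>
    (a, b) ∈ [((0 : Fin 5), (2 : Fin 5)), (0, 3), (1, 2), (1, 3), (2, 3), (4, 0), (4, 1)])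

/-- The prism `P2 □ K3`. -/
def prism : SimpleGraph (Fin 2 × Fin 3) :=
  (SimpleGraph.pathGraph 2).boxProd (completeGraph (Fin 3))

/-- `K_{3,3}` minus an edge. -/
def K33minus : SimpleGraph (Fin 3 ⊕ Fin 3) :=
  (completeBipartiteGraph (Fin 3) (Fin 3)).deleteEdges {s(Sum.inl 0, Sum.inr 0)}

/-- The ladder `B_k = P2 □ P_k`. -/
def ladder (k : ℕ) : SimpleGraph (Fin 2 × Fin k) :=
  (SimpleGraph.pathGraph 2).boxProd (SimpleGraph.pathGraph k)

/-- `B_k'`: `B_k` plus one vertex joined to the two adjacent degree-2 vertices in column 0. -/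
def ladder' (k : ℕ) : SimpleGraph ((Fin 2 × Fin k) ⊕ Unit) :=
  SimpleGraph.fromRel (fun a b =>
    match a, b with
    | Sum.inl x, Sum.inl y => (ladder k).Adj x y
    | Sum.inl x, Sum.inr _ => x.2.val = 0
    | _, _ => False)

/-- `B_k''`: `B_k'` plus one vertex joined to the two adjacent degree-2 vertices in the last
column. -/
def ladder'' (k : ℕ) : SimpleGraph ((Fin 2 × Fin k) ⊕ Bool) :=
  SimpleGraph.fromRel (fun a b =>
    match a, b with
    | Sum.inl x, Sum.inl y => (ladder k).Adj x y
    | Sum.inl x, Sum.inr c => if c then x.2.val = k - 1 else x.2.val = 0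
    | _, _ => False)


section Aux

variable {V : Type*} {G : SimpleGraph V}

lemma ladder_emb_of (a1 a2 a3 b1 b2 b3 : V)
    (e1 : G.Adj a1 a2) (e2 : G.Adj a2 a3) (e3 : G.Adj b1 b2) (e4 : G.Adj b2 b3)
    (e5 : G.Adj a1 b1) (e6 : G.Adj a2 b2) (e7 : G.Adj a3 b3)
    (n1 : ¬ G.Adj a1 a3) (n2 : ¬ G.Adj b1 b3) (n3 : ¬ G.Adj a1 b2) (n4 : ¬ G.Adj a1 b3)
    (n5 : ¬ G.Adj a2 b1) (n6 : ¬ G.Adj a2 b3) (n7 : ¬ G.Adj a3 b1) (n8 : ¬ G.Adj a3 b2)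
    (d1 : a1 ≠ a3) (d2 : b1 ≠ b3) (d3 : a1 ≠ b2) (d4 : a1 ≠ b3)
    (d5 : a2 ≠ b1) (d6 : a2 ≠ b3) (d7 : a3 ≠ b1) (d8 : a3 ≠ b2) :
    Nonempty (ladder 3 ↪g G) := by
  have d9 : a1 ≠ a2 := e1.ne
  have d10 : a2 ≠ a3 := e2.ne
  have d11 : b1 ≠ b2 := e3.ne
  have d12 : b2 ≠ b3 := e4.ne
  have d13 : a1 ≠ b1 := e5.ne
  have d14 : a2 ≠ b2 := e6.ne
  have d15 : a3 ≠ b3 := e7.ne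
  let f : Fin 2 × Fin 3 → V := fun p => ![![a1, a2, a3], ![b1, b2, b3]] p.1 p.2
  refine ⟨⟨⟨f, ?_⟩, ?_⟩⟩
  · intro x y h
    fin_cases x <;> fin_cases y <;>
      simp_all [f, Matrix.cons_val_zero, Matrix.cons_val_one]
  · intro x y
    simp only [f, ladder]
    fin_cases x <;> fin_cases y <;>
      simp [f, ladder, SimpleGraph.pathGraph_adj, SimpleGraph.boxProd_adj] <;>
      first
        | assumption
        | exact SimpleGraph.Adj.symm (by assumption)
        | exact fun h => absurd h.symm (by assumption)

lemma no_K23 (hK23 : ¬ Nonempty (completeBipartiteGraph (Fin 2) (Fin 3) ↪g G))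
    (a b c d e : V) (hab : a ≠ b) (hcd : c ≠ d) (hce : c ≠ e) (hde : d ≠ e)
    (hac : G.Adj a c) (had : G.Adj a d) (hae : G.Adj a e)
    (hbc : G.Adj b c) (hbd : G.Adj b d) (hbe : G.Adj b e)
    (hnab : ¬ G.Adj a b) (hncd : ¬ G.Adj c d) (hnce : ¬ G.Adj c e)
    (hnde : ¬ G.Adj d e) : False := by
  apply hK23
  have k1 := hac.ne; have k2 := had.ne; have k3 := hae.ne
  have k4 := hbc.ne; have k5 := hbd.ne; have k6 := hbe.ne
  let f : Fin 2 ⊕ Fin 3 → V := Sum.elim ![a, b] ![c, d, e]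
  refine ⟨⟨⟨f, ?_⟩, ?_⟩⟩
  · rintro (x | x) (y | y) h <;> fin_cases x <;> fin_cases y <;> simp_all [f]
  · rintro (x | x) (y | y) <;> fin_cases x <;> fin_cases y <;>
      simp_all [f] <;>
      first
        | assumption
        | exact SimpleGraph.Adj.symm (by assumption)
        | exact fun h => absurd h.symm (by assumption)

lemma endpoint_eq_of_length_zero {u v : V} (p : G.Walk u v) (h : p.length = 0) : u = v := by
  cases p <;> simp_all

lemma edges_of_length_one {u v : V} {p : G.Walk u v} (h : p.length = 1) :
    p.edges = [s(u, v)] := by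
  cases p with
  | nil => simp at h
  | cons h' q =>
    cases q with
    | nil => simp
    | cons h'' q' => simp at h

lemma walk_length_two {u v : V} (p : G.Walk u v) (h : p.length = 2) :
    ∃ (z : V) (h1 : G.Adj u z) (h2 : G.Adj z v),
      p = Walk.cons h1 (Walk.cons h2 Walk.nil) := by
  cases p with
  | nil => simp at h
  | cons h1 q =>
    cases q with
    | nil => simp at h
    | cons h2 q' =>
      cases q' with
      | nil => exact ⟨_, h1, h2, rfl⟩
      | cons h3 q'' => simp at h

lemma walk_length_four {u : V} (c : G.Walk u u) (h : c.length = 4) :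
    ∃ (b2 b3 b4 : V) (h1 : G.Adj u b2) (h2 : G.Adj b2 b3) (h3 : G.Adj b3 b4)
      (h4 : G.Adj b4 u),
      c = Walk.cons h1 (Walk.cons h2 (Walk.cons h3 (Walk.cons h4 Walk.nil))) := by
  cases c with
  | nil => simp at h
  | cons h1 q =>
    cases q with
    | nil => simp at h
    | cons h2 q =>
      cases q with
      | nil => simp at h
      | cons h3 q =>
        cases q with
        | nil => simp at h
        | cons h4 q =>
          cases q with
          | nil => exact ⟨_, _, _, h1, h2, h3, h4, rfl⟩
          | cons h5 q => simp at h

lemma end_mem_tail_support {u v : V} (p : G.Walk u v) (h : u ≠ v) :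
    v ∈ p.support.tail := by
  cases p with
  | nil => exact absurd rfl h
  | cons h' q => simpa using q.end_mem_support

lemma walk_split_two {u v : V} [DecidableEq V] (p : G.Walk u v) (x x' : V)
    (hx : x ∈ p.support) (hx' : x' ∈ p.support) :
    (∃ (q : G.Walk u x) (r : G.Walk x x') (s : G.Walk x' v),
        p = q.append (r.append s)) ∨
    (∃ (q : G.Walk u x') (r : G.Walk x' x) (s : G.Walk x v),
        p = q.append (r.append s)) := by
  induction p with
  | nil =>
    simp only [Walk.support_nil, List.mem_singleton] at hx hx'
    subst hx; subst hx'
    exact Or.inl ⟨Walk.nil, Walk.nil, Walk.nil, rfl⟩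
  | @cons a b c hadj q ih =>
    by_cases hxa : x = a
    · subst hxa
      left
      refine ⟨Walk.nil, (Walk.cons hadj q).takeUntil x' hx',
        (Walk.cons hadj q).dropUntil x' hx', ?_⟩
      rw [Walk.nil_append, Walk.take_spec]
    · by_cases hx'a : x' = a
      · subst hx'a
        right
        refine ⟨Walk.nil, (Walk.cons hadj q).takeUntil x hx,
          (Walk.cons hadj q).dropUntil x hx, ?_⟩
        rw [Walk.nil_append, Walk.take_spec]
      · have hxq : x ∈ q.support := by
          rcases List.mem_cons.mp (Walk.support_cons hadj q ▸ hx : x ∈ a :: q.support)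
            with h | h
          · exact absurd (by simpa using h) hxa
          · simpa using h
        have hx'q : x' ∈ q.support := by
          rcases List.mem_cons.mp (Walk.support_cons hadj q ▸ hx' : x' ∈ a :: q.support)
            with h | h
          · exact absurd (by simpa using h) hx'a
          · simpa using h
        rcases ih hxq hx'q with ⟨q1, r, s, hsplit⟩ | ⟨q1, r, s, hsplit⟩
        · exact Or.inl ⟨Walk.cons hadj q1, r, s, by rw [hsplit, Walk.cons_append]⟩
        · exact Or.inr ⟨Walk.cons hadj q1, r, s, by rw [hsplit, Walk.cons_append]⟩

lemma induced_cycle_of (hch : KChordal G 4) {v1 y d : V} (p : G.Walk y d)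
    (hp : p.IsPath) (hv1 : v1 ∉ p.support) (hyd : y ≠ d)
    (h1y : G.Adj v1 y) (hd1 : G.Adj d v1)
    (hnb : ∀ x ∈ p.support, G.Adj v1 x → x = y ∨ x = d)
    (hchord : ∀ x ∈ p.support, ∀ x' ∈ p.support, G.Adj x x' → s(x, x') ∈ p.edges) :
    p.length + 2 ≤ 4 := by
  have hZlen : (Walk.cons h1y (p.concat hd1)).length = p.length + 2 := by
    simp [Walk.length_cons, Walk.length_concat]
  have hZsup : (Walk.cons h1y (p.concat hd1)).support = v1 :: (p.support.concat v1) := by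
    simp [Walk.support_cons, Walk.support_concat]
  have hZed : (Walk.cons h1y (p.concat hd1)).edges
      = s(v1, y) :: (p.edges.concat s(d, v1)) := by
    simp [Walk.edges_cons, Walk.edges_concat]
  have hd1e : s(d, v1) ∉ p.edges := fun h =>
    hv1 (p.snd_mem_support_of_mem_edges h)
  have h1ye : s(v1, y) ∉ p.edges := fun h =>
    hv1 (p.fst_mem_support_of_mem_edges h)
  have hne : s(v1, y) ≠ s(d, v1) := by
    intro h
    rw [Sym2.eq_iff] at h
    rcases h with ⟨h1, h2⟩ | ⟨h1, h2⟩
    · exact hd1.ne' h1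
    · exact hyd h2
  have hcyc : (Walk.cons h1y (p.concat hd1)).IsCycle := by
    constructor
    · constructor
      · constructor
        have h2 : (p.edges ++ [s(d, v1)]).Nodup := by
          rw [List.nodup_append']
          exact ⟨hp.isTrail.edges_nodup, List.nodup_singleton _,
            fun e he he' => hd1e (by rwa [List.mem_singleton.mp he'] at he)⟩
        rw [hZed, List.concat_eq_append]
        exact List.nodup_cons.mpr ⟨fun h => (List.mem_append.mp h).elim h1ye
          (fun h' => hne (List.mem_singleton.mp h')), h2⟩
      · simp
    · rw [hZsup]
      simp only [List.tail_cons, List.concat_eq_append]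
      rw [List.nodup_append']
      exact ⟨hp.support_nodup, List.nodup_singleton _,
        fun a ha ha' => hv1 (by rwa [List.mem_singleton.mp ha'] at ha)⟩
  have hind : IsInducedCycle G (Walk.cons h1y (p.concat hd1)) := by
    refine ⟨hcyc, ?_⟩
    intro a ha b hb hab
    rw [hZsup] at ha hb
    simp only [List.mem_cons, List.concat_eq_append, List.mem_append,
      List.mem_singleton, List.not_mem_nil, or_false] at ha hb
    rw [hZed]
    have hmem : ∀ e ∈ p.edges, e ∈ s(v1, y) :: (p.edges.concat s(d, v1)) := by
      intro e he
      simp [List.concat_eq_append, he]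
    rcases ha with ha | ha | ha
    · subst ha
      rcases hb with hb | hb | hb
      · exact absurd hb hab.ne'
      · rcases hnb b hb hab with rfl | rfl
        · simp
        · simp [List.concat_eq_append, Sym2.eq_swap]
      · subst hb
        exact absurd rfl hab.ne
    · rcases hb with hb | hb | hb
      · subst hb
        rcases hnb a ha hab.symm with rfl | rfl
        · simp [Sym2.eq_swap]
        · simp [List.concat_eq_append]
      · exact hmem _ (hchord a ha b hb hab)
      · subst hb
        rcases hnb a ha hab.symm with rfl | rfl
        · simp [Sym2.eq_swap]
        · simp [List.concat_eq_append]
    · subst ha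
      rcases hb with hb | hb | hb
      · exact absurd hb hab.ne'
      · rcases hnb b hb hab with rfl | rfl
        · simp
        · simp [List.concat_eq_append, Sym2.eq_swap]
      · exact absurd hb hab.ne'
  have := hch v1 _ hind
  omega

lemma branch (hch : KChordal G 4) (htf : G.CliqueFree 3)
    (hK23 : ¬ Nonempty (completeBipartiteGraph (Fin 2) (Fin 3) ↪g G))
    {v1 a v3 b y : V} (p : G.Walk y a)
    (hpPath : p.IsPath) (hpx : v1 ∉ p.support) (h2k : 2 ≤ p.length)
    (hv3s : v3 ∉ p.support) (hbs : b ∉ p.support)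
    (hchord : ∀ z ∈ p.support, ∀ z' ∈ p.support, G.Adj z z' → s(z, z') ∈ p.edges)
    (h1a : G.Adj v1 a) (ha3 : G.Adj a v3) (h3b : G.Adj v3 b) (hb1 : G.Adj b v1)
    (h1y : G.Adj v1 y)
    (hn13 : ¬ G.Adj v1 v3) (hnab : ¬ G.Adj a b)
    (hya : ¬ G.Adj y a) (hy3 : ¬ G.Adj y v3) (hyb : ¬ G.Adj y b)
    (hnbr : ∀ w, G.Adj v1 w → w = a ∨ w = b ∨ w = y)
    (dya : y ≠ a) (dy3 : y ≠ v3) (dyb : y ≠ b) (d13 : v1 ≠ v3) (dab : a ≠ b) :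
    Nonempty (ladder 3 ↪g G) := by
  classical
  have hlen4 : p.length + 2 ≤ 4 :=
    induced_cycle_of hch p hpPath hpx dya h1y h1a.symm
      (fun z hz hadj => by
        rcases hnbr z hadj with rfl | rfl | rfl
        · exact Or.inr rfl
        · exact absurd hz hbs
        · exact Or.inl rfl) hchord
  have hlen2 : p.length = 2 := by omega
  obtain ⟨z, hyz, hza, hpeq⟩ := walk_length_two p hlen2
  have hzs : z ∈ p.support := by rw [hpeq]; simp
  have dzy : z ≠ y := hyz.ne'
  have dza : z ≠ a := hza.ne
  have dz1 : z ≠ v1 := fun h => hpx (h ▸ hzs)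
  have dz3 : z ≠ v3 := fun h => hv3s (h ▸ hzs)
  have dzb : z ≠ b := fun h => hbs (h ▸ hzs)
  have hz1 : ¬ G.Adj v1 z := by
    intro h
    rcases hnbr z h with h' | h' | h'
    · exact dza h'
    · exact dzb h'
    · exact dzy h'
  have hz3 : ¬ G.Adj z v3 := fun h =>
    htf {z, a, v3} (SimpleGraph.is3Clique_triple_iff.mpr ⟨hza, h, ha3⟩)
  have hzb : ¬ G.Adj z b := fun h =>
    no_K23 hK23 a b v1 v3 z dab d13 dz1.symm dz3.symm
      h1a.symm ha3 hza.symm hb1 h3b.symm h.symm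
      hnab hn13 hz1 (fun h' => hz3 h'.symm)
  exact ladder_emb_of y v1 b z a v3
    h1y.symm hb1.symm hza ha3 hyz h1a h3b.symm
    hyb hz3 hya hy3 hz1 hn13 (fun h => hzb h.symm) (fun h => hnab h.symm)
    dyb dz3 dya dy3 dz1.symm d13 dzb.symm dab.symm

end Aux

theorem stmt14 {V : Type*} [Fintype V] (G : SimpleGraph V)
    (h2c : TwoConnected G)
    (hcyc : ∀ v : V, ∃ (u : V) (c : G.Walk u u), IsInducedCycle G c ∧ v ∈ c.support)
    (htf : G.CliqueFree 3)
    (hK23 : ¬ Nonempty (completeBipartiteGraph (Fin 2) (Fin 3) ↪g G))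
    (hsub : ∀ v : V, (G.neighborSet v).ncard ≤ 3)
    (hch : KChordal G 4)
    (hC4 : ∃ (v : V) (c : G.Walk v v), IsInducedCycle G c ∧ c.length = 4 ∧
      ∃ x ∈ c.support, (G.neighborSet x).ncard = 3 ∧
        ∃ y : V, G.Adj x y ∧ y ∉ c.support) :
    Nonempty (ladder 3 ↪g G) := by
  classical
  obtain ⟨v0, c0, hic0, hlen0, x, hx, hdeg, y, hxy, hy⟩ := hC4
  have hmemrot : ∀ z, z ∈ (c0.rotate x hx).support ↔ z ∈ c0.support := by
    intro z
    rw [Walk.rotate, Walk.mem_support_append_iff, or_comm, ← Walk.mem_support_append_iff,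
      Walk.take_spec]
  have hicr : IsInducedCycle G (c0.rotate x hx) := by
    refine ⟨hic0.1.rotate hx, ?_⟩
    intro a ha b hb hab
    rw [(Walk.rotate_edges c0 x hx).mem_iff]
    exact hic0.2 a ((hmemrot a).mp ha) b ((hmemrot b).mp hb) hab
  have hlenr : (c0.rotate x hx).length = 4 := by
    rw [← Walk.length_edges, (Walk.rotate_edges c0 x hx).perm.length_eq, Walk.length_edges,
      hlen0]
  obtain ⟨v2, v3, v4, h12, h23, h34, h4x, hceq⟩ := walk_length_four (c0.rotate x hx) hlenr
  have hsupr : ∀ z, z ∈ (c0.rotate x hx).support ↔ (z = x ∨ z = v2 ∨ z = v3 ∨ z = v4) := by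
    intro z
    rw [hceq]
    simp only [Walk.support_cons, Walk.support_nil, List.mem_cons, List.mem_singleton]
    tauto
  have hced : (c0.rotate x hx).edges = [s(x, v2), s(v2, v3), s(v3, v4), s(v4, x)] := by
    rw [hceq]; simp
  have hnd := (hic0.1.rotate hx).support_nodup
  rw [hceq] at hnd
  have hnd4 : List.Nodup [v2, v3, v4, x] := by simpa using hnd
  have d23 : v2 ≠ v3 := by intro h; subst h; simp at hnd4
  have d24 : v2 ≠ v4 := by intro h; subst h; simp at hnd4
  have d2x : v2 ≠ x := by intro h; subst h; simp at hnd4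
  have d34 : v3 ≠ v4 := by intro h; subst h; simp at hnd4
  have d3x : v3 ≠ x := by intro h; subst h; simp at hnd4
  have d4x : v4 ≠ x := by intro h; subst h; simp at hnd4
  -- y is outside the cycle
  have hy' : ∀ z, z ∈ c0.support ↔ (z = x ∨ z = v2 ∨ z = v3 ∨ z = v4) := by
    intro z; rw [← hmemrot]; exact hsupr z
  have hyx : y ≠ x := hxy.ne'
  have hyv2' : y ≠ v2 := fun h => hy ((hy' y).mpr (Or.inr (Or.inl h)))
  have hyv3' : y ≠ v3 := fun h => hy ((hy' y).mpr (Or.inr (Or.inr (Or.inl h))))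
  have hyv4' : y ≠ v4 := fun h => hy ((hy' y).mpr (Or.inr (Or.inr (Or.inr h))))
  -- induced 4-cycle non-adjacencies
  have hxv4 : G.Adj x v4 := h4x.symm
  have hnx3 : ¬ G.Adj x v3 := by
    intro h
    have hm := hicr.2 x ((hsupr x).mpr (Or.inl rfl)) v3
      ((hsupr v3).mpr (Or.inr (Or.inr (Or.inl rfl)))) h
    rw [hced] at hm
    rcases List.mem_cons.mp hm with h | hm1
    · rw [Sym2.eq_iff] at h; rcases h with ⟨h1, h2⟩ | ⟨h1, h2⟩ <;> simp_all
    rcases List.mem_cons.mp hm1 with h | hm2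
    · rw [Sym2.eq_iff] at h; rcases h with ⟨h1, h2⟩ | ⟨h1, h2⟩ <;> simp_all
    rcases List.mem_cons.mp hm2 with h | hm3
    · rw [Sym2.eq_iff] at h; rcases h with ⟨h1, h2⟩ | ⟨h1, h2⟩ <;> simp_all
    have h := List.mem_singleton.mp hm3
    rw [Sym2.eq_iff] at h; rcases h with ⟨h1, h2⟩ | ⟨h1, h2⟩ <;> simp_all
  have hn24 : ¬ G.Adj v2 v4 := by
    intro h
    have hm := hicr.2 v2 ((hsupr v2).mpr (Or.inr (Or.inl rfl))) v4
      ((hsupr v4).mpr (Or.inr (Or.inr (Or.inr rfl)))) h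
    rw [hced] at hm
    rcases List.mem_cons.mp hm with h | hm1
    · rw [Sym2.eq_iff] at h; rcases h with ⟨h1, h2⟩ | ⟨h1, h2⟩ <;> simp_all
    rcases List.mem_cons.mp hm1 with h | hm2
    · rw [Sym2.eq_iff] at h; rcases h with ⟨h1, h2⟩ | ⟨h1, h2⟩ <;> simp_all
    rcases List.mem_cons.mp hm2 with h | hm3
    · rw [Sym2.eq_iff] at h; rcases h with ⟨h1, h2⟩ | ⟨h1, h2⟩ <;> simp_all
    have h := List.mem_singleton.mp hm3
    rw [Sym2.eq_iff] at h; rcases h with ⟨h1, h2⟩ | ⟨h1, h2⟩ <;> simp_all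
  -- neighbourhood of x
  have hsub3 : ({v2, v4, y} : Set V) ⊆ G.neighborSet x := by
    rintro w (rfl | rfl | rfl)
    · exact h12
    · exact hxv4
    · exact hxy
  have hcard3 : ({v2, v4, y} : Set V).ncard = 3 := by
    rw [Set.ncard_insert_of_notMem (by simp [d24, hyv2'.symm]),
      Set.ncard_insert_of_notMem (by simp [hyv4'.symm]), Set.ncard_singleton]
  have hNeq : G.neighborSet x = {v2, v4, y} :=
    (Set.eq_of_subset_of_ncard_le hsub3 (by rw [hdeg, hcard3]) (Set.toFinite _)).symm
  have hnbr : ∀ w, G.Adj x w → w = v2 ∨ w = v4 ∨ w = y := by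
    intro w hw
    have hmem : w ∈ G.neighborSet x := hw
    rw [hNeq] at hmem
    simpa using hmem
  -- non-adjacencies of y
  have hyv2 : ¬ G.Adj y v2 := fun h =>
    htf {y, x, v2} (SimpleGraph.is3Clique_triple_iff.mpr ⟨hxy.symm, h, h12⟩)
  have hyv4 : ¬ G.Adj y v4 := fun h =>
    htf {y, x, v4} (SimpleGraph.is3Clique_triple_iff.mpr ⟨hxy.symm, h, hxv4⟩)
  have hyv3 : ¬ G.Adj y v3 := fun h =>
    no_K23 hK23 x v3 v2 v4 y d3x.symm d24 hyv2'.symm hyv4'.symm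
      h12 hxv4 hxy h23.symm h34 h.symm
      hnx3 hn24 (fun h' => hyv2 h'.symm) (fun h' => hyv4 h'.symm)
  -- shortest path machinery
  have hPred : ∃ n : ℕ, ∃ d, (d = v2 ∨ d = v3 ∨ d = v4) ∧
      ∃ p : G.Walk y d, p.IsPath ∧ x ∉ p.support ∧ p.length = n := by
    have hconn := h2c.2 x
    have hr := hconn.preconnected ⟨y, hyx⟩ ⟨v2, d2x⟩
    obtain ⟨w⟩ := hr
    let w' := w.map (SimpleGraph.Embedding.induce {w : V | w ≠ x}).toHom
    refine ⟨w'.bypass.length, v2, Or.inl rfl, w'.bypass, w'.bypass_isPath, ?_, rfl⟩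
    intro hxs
    have hmem := w'.support_bypass_subset hxs
    rw [Walk.support_map] at hmem
    obtain ⟨a, ha, ha'⟩ := List.mem_map.mp hmem
    exact a.prop ha'
  set k := Nat.find hPred with hkdef
  obtain ⟨d, hdD, p, hpPath, hpx, hpk⟩ := Nat.find_spec hPred
  have hmin : ∀ (d' : V), (d' = v2 ∨ d' = v3 ∨ d' = v4) → ∀ q : G.Walk y d', q.IsPath →
      x ∉ q.support → k ≤ q.length := by
    intro d' hd' q hq hqx
    by_contra hlt
    exact Nat.find_min hPred (show q.length < k by omega) ⟨d', hd', q, hq, hqx, rfl⟩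
  have hyd : y ≠ d := by
    rcases hdD with rfl | rfl | rfl
    · exact hyv2'
    · exact hyv3'
    · exact hyv4'
  have h2k : 2 ≤ k := by
    by_contra hlt
    have h01 : p.length = 0 ∨ p.length = 1 := by omega
    rcases h01 with h0 | h1
    · exact hyd (endpoint_eq_of_length_zero p h0)
    · have hadj : G.Adj y d := p.adj_of_mem_edges (by rw [edges_of_length_one h1]; simp)
      rcases hdD with rfl | rfl | rfl
      · exact hyv2 hadj
      · exact hyv3 hadj
      · exact hyv4 hadj
  -- (F_a) only the endpoint of p lies in {v2, v3, v4}
  have hDend : ∀ z, (hz : z ∈ p.support) → (z = v2 ∨ z = v3 ∨ z = v4) → z = d := by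
    intro z hz hzD
    have h1 : k ≤ (p.takeUntil z hz).length :=
      hmin z hzD _ (hpPath.takeUntil hz)
        (fun hh => hpx (p.support_takeUntil_subset hz hh))
    have h2 : (p.takeUntil z hz).length + (p.dropUntil z hz).length = p.length := by
      have hts := congrArg Walk.length (p.take_spec hz)
      rwa [Walk.length_append] at hts
    exact endpoint_eq_of_length_zero (p.dropUntil z hz) (by omega)
  -- (F_b) p is an induced path
  have hchord : ∀ a ∈ p.support, ∀ b ∈ p.support, G.Adj a b → s(a, b) ∈ p.edges := by
    have key : ∀ (a b : V), G.Adj a b →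
        (∃ (q : G.Walk y a) (r : G.Walk a b) (s : G.Walk b d),
          p = q.append (r.append s)) →
        s(a, b) ∈ p.edges := by
      rintro a b hab ⟨q, r, s, hps⟩
      have hxq : x ∉ (q.append (Walk.cons hab s)).support := by
        intro hh
        rw [Walk.mem_support_append_iff] at hh
        rcases hh with hh | hh
        · exact hpx (by rw [hps, Walk.mem_support_append_iff]; exact Or.inl hh)
        · rw [Walk.support_cons] at hh
          rcases List.mem_cons.mp hh with hh | hh
          · subst hh
            refine hpx ?_
            rw [hps, Walk.mem_support_append_iff]
            exact Or.inl q.end_mem_support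
          · refine hpx ?_
            rw [hps, Walk.mem_support_append_iff, Walk.mem_support_append_iff]
            exact Or.inr (Or.inr hh)
      have hle : k ≤ (q.append (Walk.cons hab s)).bypass.length :=
        hmin d hdD _ (Walk.bypass_isPath _)
          (fun hh => hxq (Walk.support_bypass_subset _ hh))
      have hle2 : (q.append (Walk.cons hab s)).bypass.length
          ≤ q.length + (s.length + 1) := by
        have hb := Walk.length_bypass_le (q.append (Walk.cons hab s))
        rwa [Walk.length_append, Walk.length_cons] at hb
      have hklen : q.length + (r.length + s.length) = k := by
        have hl := congrArg Walk.length hps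
        rw [Walk.length_append, Walk.length_append] at hl
        omega
      have hr1 : r.length = 1 := by
        have hr0 : r.length ≠ 0 := fun h0 => hab.ne (endpoint_eq_of_length_zero r h0)
        omega
      have hredge : r.edges = [s(a, b)] := edges_of_length_one hr1
      rw [hps, Walk.edges_append, Walk.edges_append]
      simp [hredge]
    intro a ha b hb hab
    rcases walk_split_two p a b ha hb with h | h
    · exact key a b hab h
    · rw [Sym2.eq_swap]
      exact key b a hab.symm h
  -- (F_c) a support vertex adjacent to a cycle vertex is at the end of p
  have hlast : ∀ z, (hz : z ∈ p.support) → ∀ w, (w = v2 ∨ w = v3 ∨ w = v4) →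
      G.Adj z w → z = d ∨ s(z, d) ∈ p.edges := by
    intro z hz w hwD hzw
    by_cases hzd : z = d
    · exact Or.inl hzd
    have hdnt : d ∉ (p.takeUntil z hz).support := by
      have hdtail : d ∈ (p.dropUntil z hz).support.tail :=
        end_mem_tail_support _ hzd
      have hnodup := hpPath.support_nodup
      rw [← Walk.take_spec p hz, Walk.support_append, List.nodup_append'] at hnodup
      exact fun hh => hnodup.2.2 hh hdtail
    have hwnt : w ∉ (p.takeUntil z hz).support := by
      intro hh
      have hwp : w ∈ p.support := p.support_takeUntil_subset hz hh
      have hwd : w = d := hDend w hwp hwD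
      exact hdnt (hwd ▸ hh)
    have hq'path : ((p.takeUntil z hz).concat hzw).IsPath := by
      rw [Walk.isPath_def, Walk.support_concat, List.nodup_append']
      exact ⟨(hpPath.takeUntil hz).support_nodup, List.nodup_singleton _,
        fun u hu hu' => hwnt ((List.mem_singleton.mp hu') ▸ hu)⟩
    have hxq' : x ∉ ((p.takeUntil z hz).concat hzw).support := by
      rw [Walk.support_concat]
      intro hh
      rcases List.mem_append.mp hh with hh | hh
      · exact hpx (p.support_takeUntil_subset hz hh)
      · have hxw : x = w := List.mem_singleton.mp hh
        rcases hwD with rfl | rfl | rfl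
        · exact d2x hxw.symm
        · exact d3x hxw.symm
        · exact d4x hxw.symm
    have hle := hmin w hwD _ hq'path hxq'
    rw [Walk.length_concat] at hle
    have hsum : (p.takeUntil z hz).length + (p.dropUntil z hz).length = p.length := by
      have hts := congrArg Walk.length (p.take_spec hz)
      rwa [Walk.length_append] at hts
    have hd1 : (p.dropUntil z hz).length = 1 := by
      have hne0 : (p.dropUntil z hz).length ≠ 0 :=
        fun h0 => hzd (endpoint_eq_of_length_zero _ h0)
      omega
    exact Or.inr (p.edges_dropUntil_subset hz
      (by rw [edges_of_length_one hd1]; simp))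
  -- dispatch on the endpoint
  rcases hdD with rfl | rfl | rfl
  · -- d = v2
    have hv3s : v3 ∉ p.support := fun h =>
      d23 (hDend v3 h (Or.inr (Or.inl rfl))).symm
    have hv4s : v4 ∉ p.support := fun h =>
      d24 (hDend v4 h (Or.inr (Or.inr rfl))).symm
    exact branch hch htf hK23 p hpPath hpx (by omega) hv3s hv4s hchord
      h12 h23 h34 h4x hxy hnx3 hn24 hyv2 hyv3 hyv4 hnbr
      hyv2' hyv3' hyv4' (Ne.symm d3x) d24
  · -- d = d : contradiction
    exfalso
    have hv4s : v4 ∉ p.support := fun h =>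
      d34 (hDend v4 h (Or.inr (Or.inr rfl))).symm
    have hp'path : (p.concat h34).IsPath := by
      rw [Walk.isPath_def, Walk.support_concat, List.nodup_append']
      exact ⟨hpPath.support_nodup, List.nodup_singleton _,
        fun u hu hu' => hv4s ((List.mem_singleton.mp hu') ▸ hu)⟩
    have hp'x : x ∉ (p.concat h34).support := by
      rw [Walk.support_concat]
      intro hh
      rcases List.mem_append.mp hh with hh | hh
      · exact hpx hh
      · exact d4x (List.mem_singleton.mp hh).symm
    have hp'mem : ∀ z, z ∈ (p.concat h34).support ↔ z ∈ p.support ∨ z = v4 := by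
      intro z
      rw [Walk.support_concat]
      simp
    have hp'edge : ∀ e, e ∈ (p.concat h34).edges ↔ e ∈ p.edges ∨ e = s(d, v4) := by
      intro e
      rw [Walk.edges_concat, List.concat_eq_append]
      simp
    have hnb' : ∀ z ∈ (p.concat h34).support, G.Adj x z → z = y ∨ z = v4 := by
      intro z hz hadj
      rcases hnbr z hadj with h | h | h
      · exfalso
        rcases (hp'mem z).mp hz with hh | hh
        · exact d23 (h.symm.trans (hDend z hh (Or.inl h)))
        · exact d24 (h.symm.trans hh)
      · exact Or.inr h
      · exact Or.inl h
    have htri : ∀ z, z ∈ p.support → G.Adj z v4 → s(z, v4) ∈ (p.concat h34).edges := by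
      intro z hh hadj
      rcases hlast z hh v4 (Or.inr (Or.inr rfl)) hadj with he | hh2
      · subst he
        exact (hp'edge _).mpr (Or.inr rfl)
      · exact absurd (SimpleGraph.is3Clique_triple_iff.mpr
          ⟨p.adj_of_mem_edges hh2, hadj, h34⟩) (htf {z, d, v4})
    have hch' : ∀ z ∈ (p.concat h34).support, ∀ z' ∈ (p.concat h34).support,
        G.Adj z z' → s(z, z') ∈ (p.concat h34).edges := by
      intro z hz z' hz' hadj
      rcases (hp'mem z).mp hz with hh | he
      · rcases (hp'mem z').mp hz' with hh' | he'
        · exact (hp'edge _).mpr (Or.inl (hchord z hh z' hh' hadj))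
        · subst he'
          exact htri z hh hadj
      · subst he
        rcases (hp'mem z').mp hz' with hh' | he'
        · rw [Sym2.eq_swap]
          exact htri z' hh' hadj.symm
        · subst he'
          exact absurd rfl hadj.ne
    have hcontr := induced_cycle_of hch (p.concat h34) hp'path hp'x hyv4' hxy h4x
      hnb' hch'
    rw [Walk.length_concat] at hcontr
    omega
  · -- d = v4
    have hv3s : v3 ∉ p.support := fun h =>
      d34 (hDend v3 h (Or.inr (Or.inl rfl)))
    have hv2s : v2 ∉ p.support := fun h =>
      d24 (hDend v2 h (Or.inl rfl))
    have hnbr' : ∀ w, G.Adj x w → w = d ∨ w = v2 ∨ w = y := by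
      intro w hw
      rcases hnbr w hw with h | h | h
      · exact Or.inr (Or.inl h)
      · exact Or.inl h
      · exact Or.inr (Or.inr h)
    exact branch hch htf hK23 p hpPath hpx (by omega) hv3s hv2s hchord
      hxv4 h34.symm h23.symm h12.symm hxy hnx3 (fun h => hn24 h.symm)
      hyv4 hyv3 hyv2 hnbr'
      hyv4' hyv3' hyv2' (Ne.symm d3x) (Ne.symm d24)
end

section
/- For every k ≥ 2, the graph B_k'' (obtained from P2 □ P_k by adding a vertex adjacent to two adjacent degree-2 vertices at one end, and then another vertex adjacent to the two adjacent degree-2 vertices at the other end) is a 2-connected subcubic 4-chordal graph with exactly two vertices of degree 2, namely the two added vertices. -/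
open SimpleGraph

variable {k : ℕ}

lemma adj_ll {i i' : Fin 2} {j j' : Fin k} :
    (ladder'' k).Adj (.inl (i,j)) (.inl (i',j')) ↔
      ((i ≠ i' ∧ j = j') ∨ (i = i' ∧ (j.val+1 = j'.val ∨ j'.val+1 = j.val))) := by
  have hi := i.2; have hi' := i'.2
  simp only [ladder'', fromRel_adj, ladder, boxProd_adj, pathGraph_adj, ne_eq,
    Sum.inl.injEq, Prod.mk.injEq, Fin.ext_iff, not_and]
  omega

lemma adj_lr {x : Fin 2 × Fin k} {c : Bool} :
    (ladder'' k).Adj (.inl x) (.inr c) ↔ (if c then x.2.val = k - 1 else x.2.val = 0) := by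
  simp [ladder'', fromRel_adj]

lemma adj_rl {x : Fin 2 × Fin k} {c : Bool} :
    (ladder'' k).Adj (.inr c) (.inl x) ↔ (if c then x.2.val = k - 1 else x.2.val = 0) := by
  rw [adj_comm]; exact adj_lr

lemma adj_rr {c c' : Bool} : ¬ (ladder'' k).Adj (.inr c) (.inr c') := by
  simp [ladder'', fromRel_adj]

lemma ncard2 {α : Type*} {a b : α} (hab : a ≠ b) : ({a, b} : Set α).ncard = 2 :=
  Set.ncard_pair hab

lemma ncard3 {α : Type*} {a b c : α} (hab : a ≠ b) (hac : a ≠ c) (hbc : b ≠ c) :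
    ({a, b, c} : Set α).ncard = 3 := by
  rw [Set.ncard_insert_of_notMem (by simp [hab, hac]) (Set.toFinite _),
    Set.ncard_pair hbc]

lemma nbr_inr (hk : 2 ≤ k) (c : Bool) :
    (ladder'' k).neighborSet (.inr c) =
      {.inl (0, ⟨if c then k-1 else 0, by split <;> omega⟩), .inl (1, ⟨if c then k-1 else 0, by split <;> omega⟩)} := by
  ext x
  match x with
  | .inl (i, j) =>
    have hi := i.2
    simp only [mem_neighborSet, adj_rl, Set.mem_insert_iff, Set.mem_singleton_iff,
      Sum.inl.injEq, Prod.mk.injEq, Fin.ext_iff]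
    cases c <;> simp <;> omega
  | .inr c' => simp [adj_rr]

lemma nbr_inr_ncard (hk : 2 ≤ k) (c : Bool) :
    ((ladder'' k).neighborSet (.inr c)).ncard = 2 := by
  rw [nbr_inr hk c]
  exact ncard2 (by simp)

lemma val_add_one (i : Fin 2) : ((i + 1 : Fin 2)).val = (i.val + 1) % 2 := rfl

lemma nbr_inl_0 (hk : 2 ≤ k) (i : Fin 2) (j : Fin k) (hj : j.val = 0) :
    (ladder'' k).neighborSet (.inl (i, j)) =
      {.inl (i+1, j), .inl (i, ⟨1, by omega⟩), .inr false} := by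
  have hi := i.2
  have ha := val_add_one i
  ext x
  match x with
  | .inl (i', j') =>
    have hi' := i'.2
    simp only [mem_neighborSet, adj_ll, Set.mem_insert_iff, Set.mem_singleton_iff,
      Sum.inl.injEq, Prod.mk.injEq, Fin.ext_iff, ne_eq, and_false, or_false,
      show ∀ (p : Fin 2 × Fin k) (b : Bool), (Sum.inl p = Sum.inr b) = False from
        fun _ _ => by simp]
    omega
  | .inr c =>
    simp only [mem_neighborSet, adj_lr, Set.mem_insert_iff, Set.mem_singleton_iff,
      Sum.inr.injEq, reduceCtorEq, false_or]
    cases c <;> simp <;> omega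

lemma nbr_inl_last (hk : 2 ≤ k) (i : Fin 2) (j : Fin k) (hj : j.val = k - 1) :
    (ladder'' k).neighborSet (.inl (i, j)) =
      {.inl (i+1, j), .inl (i, ⟨k-2, by omega⟩), .inr true} := by
  have hi := i.2
  have ha := val_add_one i
  ext x
  match x with
  | .inl (i', j') =>
    have hi' := i'.2
    have hjj := j.2
    simp only [mem_neighborSet, adj_ll, Set.mem_insert_iff, Set.mem_singleton_iff,
      Sum.inl.injEq, Prod.mk.injEq, Fin.ext_iff, ne_eq, and_false, or_false,
      show ∀ (p : Fin 2 × Fin k) (b : Bool), (Sum.inl p = Sum.inr b) = False from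
        fun _ _ => by simp]
    omega
  | .inr c =>
    simp only [mem_neighborSet, adj_lr, Set.mem_insert_iff, Set.mem_singleton_iff,
      Sum.inr.injEq, reduceCtorEq, false_or]
    cases c <;> simp <;> omega

lemma nbr_inl_mid (hk : 2 ≤ k) (i : Fin 2) (j : Fin k) (hj0 : j.val ≠ 0) (hjl : j.val ≠ k - 1) :
    (ladder'' k).neighborSet (.inl (i, j)) =
      {.inl (i+1, j), .inl (i, ⟨j.val - 1, by omega⟩), .inl (i, ⟨j.val + 1, by have := j.2; omega⟩)} := by
  have hi := i.2
  have ha := val_add_one i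
  have hjj := j.2
  ext x
  match x with
  | .inl (i', j') =>
    have hi' := i'.2
    simp only [mem_neighborSet, adj_ll, Set.mem_insert_iff, Set.mem_singleton_iff,
      Sum.inl.injEq, Prod.mk.injEq, Fin.ext_iff, ne_eq, and_false, or_false,
      show ∀ (p : Fin 2 × Fin k) (b : Bool), (Sum.inl p = Sum.inr b) = False from
        fun _ _ => by simp]
    omega
  | .inr c =>
    simp only [mem_neighborSet, adj_lr, Set.mem_insert_iff, Set.mem_singleton_iff,
      reduceCtorEq, or_false, false_or]
    cases c <;> simp <;> omega

lemma nbr_inl_ncard (hk : 2 ≤ k) (i : Fin 2) (j : Fin k) :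
    ((ladder'' k).neighborSet (.inl (i, j))).ncard = 3 := by
  have hi := i.2
  have ha := val_add_one i
  have hjj := j.2
  by_cases hj0 : j.val = 0
  · rw [nbr_inl_0 hk i j hj0]
    exact ncard3 (by simp only [ne_eq, Sum.inl.injEq, Prod.mk.injEq, Fin.ext_iff, not_and]; omega) (by simp) (by simp)
  · by_cases hjl : j.val = k - 1
    · rw [nbr_inl_last hk i j hjl]
      exact ncard3 (by simp only [ne_eq, Sum.inl.injEq, Prod.mk.injEq, Fin.ext_iff, not_and]; omega) (by simp) (by simp)
    · rw [nbr_inl_mid hk i j hj0 hjl]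
      exact ncard3 (by simp only [ne_eq, Sum.inl.injEq, Prod.mk.injEq, Fin.ext_iff, not_and]; omega) (by simp only [ne_eq, Sum.inl.injEq, Prod.mk.injEq, Fin.ext_iff, not_and]; omega)
        (by simp only [ne_eq, Sum.inl.injEq, Prod.mk.injEq, Fin.ext_iff, not_and]; omega)

abbrev LV (k : ℕ) := (Fin 2 × Fin k) ⊕ Bool

lemma reach_step {s : Set (LV k)} {a b : LV k} (ha : a ∈ s) (hb : b ∈ s)
    (hab : (ladder'' k).Adj a b) : ((ladder'' k).induce s).Reachable ⟨a, ha⟩ ⟨b, hb⟩ :=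
  SimpleGraph.Adj.reachable (G := (ladder'' k).induce s) (u := ⟨a, ha⟩) (v := ⟨b, hb⟩) hab

lemma reach_row {s : Set (LV k)} (r : Fin 2) :
    ∀ (m : ℕ) (hm : m < k) (hrow : ∀ jv (hjv : jv < k), jv ≤ m → (Sum.inl (r, ⟨jv, hjv⟩)) ∈ s),
    ((ladder'' k).induce s).Reachable
      ⟨.inl (r, ⟨0, by omega⟩), hrow 0 (by omega) (by omega)⟩
      ⟨.inl (r, ⟨m, hm⟩), hrow m hm le_rfl⟩
  | 0, hm, hrow => Reachable.refl _
  | (m+1), hm, hrow => by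
    refine (reach_row r m (by omega) (fun jv hjv h => hrow jv hjv (by omega))).trans
      (reach_step _ _ (adj_ll.mpr (Or.inr ⟨rfl, Or.inl rfl⟩)))

lemma reach_hub {s : Set (LV k)} (hk : 0 < k) (r : Fin 2)
    (hrow : ∀ jv (hjv : jv < k), (Sum.inl (r, ⟨jv, hjv⟩)) ∈ s)
    {i : Fin 2} {j : Fin k} (hij : (Sum.inl (i, j) : LV k) ∈ s) :
    ((ladder'' k).induce s).Reachable ⟨.inl (i, j), hij⟩
      ⟨.inl (r, ⟨0, hk⟩), hrow 0 hk⟩ := by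
  have hrj : (Sum.inl (r, j) : LV k) ∈ s := hrow j.val j.2
  have h1 : ((ladder'' k).induce s).Reachable ⟨.inl (i, j), hij⟩ ⟨.inl (r, j), hrj⟩ := by
    by_cases hir : i = r
    · subst hir; exact Reachable.refl _
    · exact reach_step _ _ (adj_ll.mpr (Or.inl ⟨hir, rfl⟩))
  have h2 := reach_row (s := s) r j.val j.2 (fun jv hjv _ => hrow jv hjv)
  exact h1.trans h2.symm

lemma val_ne_add_one (p : Fin 2) : p + 1 ≠ p := by
  have := val_add_one p
  have := p.2
  simp only [ne_eq, Fin.ext_iff]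
  omega

lemma del_connected (hk : 2 ≤ k) (v : LV k) :
    ((ladder'' k).induce {w | w ≠ v}).Connected := by
  rw [connected_iff_exists_forall_reachable]
  cases v with
  | inl pq =>
    obtain ⟨p, q⟩ := pq
    have hrow : ∀ jv (hjv : jv < k),
        (Sum.inl (p + 1, ⟨jv, hjv⟩) : LV k) ∈ {w | w ≠ Sum.inl (p, q)} := by
      intro jv hjv
      simp only [Set.mem_setOf_eq, ne_eq, Sum.inl.injEq, Prod.mk.injEq, not_and]
      intro h; exact absurd h (val_ne_add_one p)
    refine ⟨⟨.inl (p + 1, ⟨0, by omega⟩), hrow 0 (by omega)⟩, ?_⟩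
    rintro ⟨w, hw⟩
    match w with
    | .inl (i, j) => exact (reach_hub (by omega) (p + 1) hrow hw).symm
    | .inr false =>
      exact (reach_step (a := (Sum.inl (p + 1, ⟨0, by omega⟩) : LV k)) (hrow 0 (by omega)) hw
        (adj_lr.mpr (by simp))).symm.symm
    | .inr true =>
      refine Reachable.symm ((reach_step (b := (Sum.inl (p + 1, ⟨k - 1, by omega⟩) : LV k)) hw
        (hrow (k-1) (by omega)) (adj_rl.mpr (by simp))).trans
        (reach_hub (by omega) (p + 1) hrow _))
  | inr c =>
    have hrow : ∀ jv (hjv : jv < k),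
        (Sum.inl ((0 : Fin 2), ⟨jv, hjv⟩) : LV k) ∈ {w | w ≠ Sum.inr c} := by
      intro jv hjv; simp
    refine ⟨⟨.inl (0, ⟨0, by omega⟩), hrow 0 (by omega)⟩, ?_⟩
    rintro ⟨w, hw⟩
    match w with
    | .inl (i, j) => exact (reach_hub (by omega) 0 hrow hw).symm
    | .inr c' =>
      refine Reachable.symm ((reach_step (b := (Sum.inl ((0 : Fin 2),
          ⟨if c' then k - 1 else 0, by split <;> omega⟩) : LV k)) hw
        (hrow _ (by split <;> omega)) (adj_rl.mpr (by cases c' <;> simp))).trans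
        (reach_hub (by omega) 0 hrow _))

lemma SimpleGraph.Walk.getVert_cons_one {V : Type*} {G : SimpleGraph V} {u v w : V}
    (h : G.Adj u v) (p : G.Walk v w) : (Walk.cons h p).getVert 1 = v := by
  rw [Walk.getVert_cons _ _ one_ne_zero]; simp

section CycleDeg
variable {W : Type*} [DecidableEq W] {G : SimpleGraph W}

open SimpleGraph.Walk

lemma nbr_empty_of_not_mem {a b : W} {w : G.Walk a b} {x : W} (hx : x ∉ w.support) :
    w.toSubgraph.neighborSet x = ∅ := by
  ext y
  simp only [Subgraph.mem_neighborSet, Set.mem_empty_iff_false, iff_false]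
  intro hadj
  exact hx (w.mem_verts_toSubgraph.mp hadj.fst_mem)

lemma firstEdge_mem {a b : W} {w : G.Walk a b} (hw : ¬ w.Nil) :
    s(a, w.getVert 1) ∈ w.edges := by
  cases w with
  | nil => simp at hw
  | cons h r => simp [getVert_cons_one]

lemma path_start_nbr {a b : W} {p : G.Walk a b} (hp : p.IsPath) (hn : ¬ p.Nil) :
    p.toSubgraph.neighborSet a = {p.getVert 1} := by
  cases p with
  | nil => simp at hn
  | cons h r =>
    have ha : a ∉ r.support := by
      have := hp.support_nodup
      rw [support_cons, List.nodup_cons] at this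
      exact this.1
    show (G.subgraphOfAdj h ⊔ r.toSubgraph).neighborSet a = _
    rw [Subgraph.neighborSet_sup, nbr_empty_of_not_mem ha, Set.union_empty,
      neighborSet_subgraphOfAdj, getVert_cons_one, if_pos rfl, if_neg h.ne,
      Set.union_empty]

lemma cycle_start_nbr {v : W} {c : G.Walk v v} (hc : c.IsCycle) :
    ∃ x y, x ≠ y ∧ c.toSubgraph.neighborSet v = {x, y} := by
  cases c with
  | nil => exact absurd hc IsCycle.not_of_nil
  | @cons _ u _ h q =>
    rw [cons_isCycle_iff] at hc
    obtain ⟨hq, he⟩ := hc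
    have hqn : ¬ q.Nil := fun hn => h.ne hn.eq.symm
    have hqrn : ¬ q.reverse.Nil := fun hn => h.ne hn.eq
    obtain ⟨b, hb⟩ : ∃ b, b = q.reverse.getVert 1 := ⟨_, rfl⟩
    have hrev : q.toSubgraph.neighborSet v = {b} := by
      rw [← q.toSubgraph_reverse, hb]
      exact path_start_nbr hq.reverse hqrn
    have hub : u ≠ b := by
      intro hub
      apply he
      have h1 : s(v, b) ∈ q.reverse.edges := hb ▸ firstEdge_mem hqrn
      rw [edges_reverse, List.mem_reverse] at h1
      simpa only [hub] using h1
    refine ⟨u, b, hub, ?_⟩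
    show (G.subgraphOfAdj h ⊔ q.toSubgraph).neighborSet v = _
    rw [Subgraph.neighborSet_sup, hrev, neighborSet_subgraphOfAdj, if_pos rfl,
      if_neg h.ne, Set.union_empty, Set.singleton_union]

lemma cycle_nbr {v : W} {c : G.Walk v v} (hc : c.IsCycle) {x : W} (hx : x ∈ c.support) :
    (c.toSubgraph.neighborSet x).ncard = 2 := by
  obtain ⟨a, b, hab, hset⟩ := cycle_start_nbr (hc.rotate hx)
  rw [toSubgraph_rotate] at hset
  rw [hset]
  exact Set.ncard_pair hab

end CycleDeg

lemma fin2_eq_add_one {i i' : Fin 2} (h : ¬ i = i') : i' = i + 1 := by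
  have h1 := val_add_one i
  have h2 := i.2; have h3 := i'.2
  simp only [Fin.ext_iff] at *
  omega

lemma eq_pair_of_ncard {α : Type*} {X : Set α} {a b : α} (hX : X.ncard = 2)
    (hfin : X.Finite) (ha : a ∈ X) (hb : b ∈ X) (hab : a ≠ b) : X = {a, b} := by
  refine (Set.eq_of_subset_of_ncard_le ?_ ?_ hfin).symm
  · intro x hx
    rcases hx with h | h
    · exact h ▸ ha
    · exact (Set.mem_singleton_iff.mp h) ▸ hb
  · rw [hX, Set.ncard_pair hab]

lemma subset_pair_of_ncard {α : Type*} {X : Set α} {a b : α} (hX : X.ncard = 2)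
    (hfin : X.Finite) (hsub : X ⊆ {a, b}) : X = {a, b} := by
  refine Set.eq_of_subset_of_ncard_le hsub ?_ ((Set.finite_singleton b).insert a)
  rw [hX]
  exact (Set.ncard_insert_le _ _).trans (by simp)

lemma ncard_le_three {α : Type*} (a b c : α) : ({a, b, c} : Set α).ncard ≤ 3 := by
  have h1 := Set.ncard_insert_le a ({b, c} : Set α)
  have h2 := Set.ncard_insert_le b ({c} : Set α)
  simp only [Set.ncard_singleton] at *
  omega

lemma ncard_le_four {α : Type*} (a b c d : α) : ({a, b, c, d} : Set α).ncard ≤ 4 := by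
  have h1 := Set.ncard_insert_le a ({b, c, d} : Set α)
  have h2 := ncard_le_three b c d
  omega

lemma closure_prop {α : Type*} {G : SimpleGraph α} {S T : Set α}
    (hclosed : ∀ u ∈ T, ∀ w, G.Adj u w → w ∈ S → w ∈ T) :
    ∀ {a b : α} (p : G.Walk a b), (∀ x ∈ p.support, x ∈ S) → a ∈ T → b ∈ T := by
  intro a b p
  induction p with
  | nil => exact fun _ ha => ha
  | @cons u v w h q ih =>
    intro hsupp ha
    exact ih (fun x hx => hsupp x (by simp [hx]))
      (hclosed _ ha _ h (hsupp _ (by simp)))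

lemma case_top (hk : 2 ≤ k) {S : Set (LV k)}
    (hreg : ∀ x ∈ S, (S ∩ (ladder'' k).neighborSet x).ncard = 2)
    (hx0 : (Sum.inr true : LV k) ∈ S) :
    ∃ T : Set (LV k), Sum.inr true ∈ T ∧
      (∀ u ∈ T, ∀ w, (ladder'' k).Adj u w → w ∈ S → w ∈ T) ∧ T.ncard ≤ 4 := by
  have hl : k - 1 < k := by omega
  have hN : (ladder'' k).neighborSet (Sum.inr true) =
      {Sum.inl (0, ⟨k-1, hl⟩), Sum.inl (1, ⟨k-1, hl⟩)} := by
    have h := nbr_inr hk true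
    simpa using h
  have hpair : S ∩ (ladder'' k).neighborSet (Sum.inr true) =
      {Sum.inl (0, ⟨k-1, hl⟩), Sum.inl (1, ⟨k-1, hl⟩)} := by
    apply subset_pair_of_ncard (hreg _ hx0) (Set.toFinite _)
    rw [← hN]
    exact Set.inter_subset_right
  have h0S : (Sum.inl ((0:Fin 2), (⟨k-1, hl⟩ : Fin k)) : LV k) ∈ S := by
    have h : (Sum.inl ((0:Fin 2), (⟨k-1, hl⟩ : Fin k)) : LV k) ∈
        S ∩ (ladder'' k).neighborSet (Sum.inr true) := by rw [hpair]; simp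
    exact h.1
  have h1S : (Sum.inl ((1:Fin 2), (⟨k-1, hl⟩ : Fin k)) : LV k) ∈ S := by
    have h : (Sum.inl ((1:Fin 2), (⟨k-1, hl⟩ : Fin k)) : LV k) ∈
        S ∩ (ladder'' k).neighborSet (Sum.inr true) := by rw [hpair]; simp
    exact h.1
  refine ⟨{Sum.inr true, Sum.inl (0, ⟨k-1, hl⟩), Sum.inl (1, ⟨k-1, hl⟩)}, by simp, ?_,
    (ncard_le_three _ _ _).trans (by omega)⟩
  intro u hu w hadj hwS
  have hrung : ∀ (a b : Fin 2), a ≠ b →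
      (ladder'' k).Adj (Sum.inl (a, ⟨k-1, hl⟩)) (Sum.inl (b, ⟨k-1, hl⟩)) :=
    fun a b hab => adj_ll.mpr (Or.inl ⟨hab, rfl⟩)
  have htop : ∀ (a : Fin 2),
      (ladder'' k).Adj (Sum.inl (a, ⟨k-1, hl⟩)) (Sum.inr true) :=
    fun a => adj_lr.mpr (by simp)
  simp only [Set.mem_insert_iff, Set.mem_singleton_iff] at hu
  rcases hu with rfl | rfl | rfl
  · have hw : w ∈ (ladder'' k).neighborSet (Sum.inr true) := hadj
    rw [hN] at hw
    simp only [Set.mem_insert_iff, Set.mem_singleton_iff] at hw ⊢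
    tauto
  · have heq := eq_pair_of_ncard (hreg _ h0S) (Set.toFinite _)
      (Set.mem_inter h1S (hrung 1 0 (by decide)).symm)
      (Set.mem_inter hx0 (htop 0))
      (by simp)
    have hw : w ∈ S ∩ (ladder'' k).neighborSet (Sum.inl (0, ⟨k-1, hl⟩)) :=
      Set.mem_inter hwS hadj
    rw [heq] at hw
    simp only [Set.mem_insert_iff, Set.mem_singleton_iff] at hw ⊢
    tauto
  · have heq := eq_pair_of_ncard (hreg _ h1S) (Set.toFinite _)
      (Set.mem_inter h0S (hrung 0 1 (by decide)).symm)
      (Set.mem_inter hx0 (htop 1))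
      (by simp)
    have hw : w ∈ S ∩ (ladder'' k).neighborSet (Sum.inl (1, ⟨k-1, hl⟩)) :=
      Set.mem_inter hwS hadj
    rw [heq] at hw
    simp only [Set.mem_insert_iff, Set.mem_singleton_iff] at hw ⊢
    tauto

lemma fin2_add_one_add_one (i : Fin 2) : i + 1 + 1 = i := by
  have h1 := val_add_one i
  have h2 := val_add_one (i + 1)
  have h3 := i.2
  simp only [Fin.ext_iff] at *
  omega

lemma case_inl (hk : 2 ≤ k) {S : Set (LV k)}
    (hreg : ∀ x ∈ S, (S ∩ (ladder'' k).neighborSet x).ncard = 2)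
    (i0 : Fin 2) (j0 : Fin k) (hA : (Sum.inl (i0, j0) : LV k) ∈ S)
    (hcol : ∀ (i : Fin 2) (j : Fin k), (Sum.inl (i, j) : LV k) ∈ S → j.val ≤ j0.val)
    (hnt : (Sum.inr true : LV k) ∉ S) :
    ∃ T : Set (LV k), Sum.inl (i0, j0) ∈ T ∧
      (∀ u ∈ T, ∀ w, (ladder'' k).Adj u w → w ∈ S → w ∈ T) ∧ T.ncard ≤ 4 := by
  by_cases hj0 : j0.val = 0
  · refine ⟨{Sum.inl (0, j0), Sum.inl (1, j0), Sum.inr false}, ?_, ?_,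
      (ncard_le_three _ _ _).trans (by omega)⟩
    · have hi : i0.val = 0 ∨ i0.val = 1 := by have := i0.2; omega
      simp only [Set.mem_insert_iff, Set.mem_singleton_iff, Sum.inl.injEq, Prod.mk.injEq,
        Fin.ext_iff, Fin.val_zero, Fin.val_one, and_true, or_false, eq_self_iff_true,
        show ∀ (p : Fin 2 × Fin k) (b : Bool), (Sum.inl p = Sum.inr b) = False from
          fun _ _ => by simp]
      omega
    · intro u hu w hadj hwS
      match w with
      | .inl (i, j) =>
        have hj : j.val ≤ j0.val := hcol i j hwS
        have hjj : j = j0 := Fin.ext (by omega)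
        have hi : i.val = 0 ∨ i.val = 1 := by have := i.2; omega
        subst hjj
        simp only [Set.mem_insert_iff, Set.mem_singleton_iff, Sum.inl.injEq, Prod.mk.injEq,
          Fin.ext_iff, Fin.val_zero, Fin.val_one, and_true, or_false, eq_self_iff_true,
          show ∀ (p : Fin 2 × Fin k) (b : Bool), (Sum.inl p = Sum.inr b) = False from
            fun _ _ => by simp]
        omega
      | .inr false => simp
      | .inr true => exact absurd hwS hnt
  · have hjm : j0.val - 1 < k := by have := j0.2; omega
    have hne01 : i0 ≠ i0 + 1 := (val_ne_add_one i0).symm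
    set A : LV k := Sum.inl (i0, j0) with hAdef
    set B : LV k := Sum.inl (i0 + 1, j0) with hBdef
    set C : LV k := Sum.inl (i0, ⟨j0.val - 1, hjm⟩) with hCdef
    set D : LV k := Sum.inl (i0 + 1, ⟨j0.val - 1, hjm⟩) with hDdef
    have hAB : (ladder'' k).Adj A B := adj_ll.mpr (Or.inl ⟨hne01, rfl⟩)
    have hAC : (ladder'' k).Adj A C := adj_ll.mpr (Or.inr ⟨rfl, Or.inr (by simp; omega)⟩)
    have hBD : (ladder'' k).Adj B D := adj_ll.mpr (Or.inr ⟨rfl, Or.inr (by simp; omega)⟩)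
    have hCD : (ladder'' k).Adj C D := adj_ll.mpr (Or.inl ⟨hne01, rfl⟩)
    have claim1 : S ∩ (ladder'' k).neighborSet A ⊆ {B, C} := by
      rintro w ⟨hwS, hwN⟩
      match w with
      | .inl (i, j) =>
        have hj : j.val ≤ j0.val := hcol i j hwS
        have hadj : (ladder'' k).Adj (Sum.inl (i0, j0)) (Sum.inl (i, j)) := hwN
        rw [adj_ll] at hadj
        simp only [Set.mem_insert_iff, Set.mem_singleton_iff, hBdef, hCdef,
          Sum.inl.injEq, Prod.mk.injEq]
        rcases hadj with ⟨hne, hjj⟩ | ⟨heq, hor⟩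
        · exact Or.inl ⟨fin2_eq_add_one hne, hjj.symm⟩
        · refine Or.inr ⟨heq.symm, Fin.ext ?_⟩
          show j.val = j0.val - 1
          omega
      | .inr false =>
        have hadj : (ladder'' k).Adj (Sum.inl (i0, j0)) (Sum.inr false) := hwN
        rw [adj_lr] at hadj
        simp at hadj
        omega
      | .inr true => exact absurd hwS hnt
    have claim2 : S ∩ (ladder'' k).neighborSet B ⊆ {A, D} := by
      rintro w ⟨hwS, hwN⟩
      match w with
      | .inl (i, j) =>
        have hj : j.val ≤ j0.val := hcol i j hwS
        have hadj : (ladder'' k).Adj (Sum.inl (i0 + 1, j0)) (Sum.inl (i, j)) := hwN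
        rw [adj_ll] at hadj
        simp only [Set.mem_insert_iff, Set.mem_singleton_iff, hAdef, hDdef,
          Sum.inl.injEq, Prod.mk.injEq]
        rcases hadj with ⟨hne, hjj⟩ | ⟨heq, hor⟩
        · refine Or.inl ⟨?_, hjj.symm⟩
          rw [fin2_eq_add_one hne, fin2_add_one_add_one]
        · refine Or.inr ⟨heq.symm, Fin.ext ?_⟩
          show j.val = j0.val - 1
          omega
      | .inr false =>
        have hadj : (ladder'' k).Adj (Sum.inl (i0 + 1, j0)) (Sum.inr false) := hwN
        rw [adj_lr] at hadj
        simp at hadj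
        omega
      | .inr true => exact absurd hwS hnt
    have hBC : B ≠ C := by
      simp only [hBdef, hCdef, ne_eq, Sum.inl.injEq, Prod.mk.injEq, Fin.ext_iff, not_and]
      intro _
      omega
    have hAD : A ≠ D := by
      have := hne01
      simp only [ne_eq, Fin.ext_iff] at this
      simp only [hAdef, hDdef, ne_eq, Sum.inl.injEq, Prod.mk.injEq, Fin.ext_iff, not_and]
      omega
    have hpairA : S ∩ (ladder'' k).neighborSet A = {B, C} :=
      subset_pair_of_ncard (hreg _ hA) (Set.toFinite _) claim1
    have hBS : B ∈ S := by
      have h : B ∈ S ∩ (ladder'' k).neighborSet A := by rw [hpairA]; simp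
      exact h.1
    have hCS : C ∈ S := by
      have h : C ∈ S ∩ (ladder'' k).neighborSet A := by rw [hpairA]; simp
      exact h.1
    have hDS : D ∈ S := by
      by_contra hD
      have hsub : S ∩ (ladder'' k).neighborSet B ⊆ {A} := by
        intro y hy
        rcases claim2 hy with h | h
        · exact h
        · exact absurd (h ▸ hy.1) hD
      have := Set.ncard_le_ncard hsub (Set.finite_singleton A)
      rw [hreg _ hBS, Set.ncard_singleton] at this
      omega
    refine ⟨{A, B, C, D}, by simp, ?_, ncard_le_four _ _ _ _⟩
    intro u hu w hadj hwS
    simp only [Set.mem_insert_iff, Set.mem_singleton_iff] at hu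
    have hmem : ∀ x : LV k, x ∈ ({B, C} : Set (LV k)) ∨ x ∈ ({A, D} : Set (LV k)) →
        x ∈ ({A, B, C, D} : Set (LV k)) := by
      intro x hx
      simp only [Set.mem_insert_iff, Set.mem_singleton_iff] at hx ⊢
      tauto
    rcases hu with rfl | rfl | rfl | rfl
    · exact hmem _ (Or.inl (claim1 (Set.mem_inter hwS hadj)))
    · exact hmem _ (Or.inr (claim2 (Set.mem_inter hwS hadj)))
    · have hpairC : S ∩ (ladder'' k).neighborSet C = {A, D} :=
        eq_pair_of_ncard (hreg _ hCS) (Set.toFinite _)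
          (Set.mem_inter hA hAC.symm) (Set.mem_inter hDS hCD) hAD
      exact hmem _ (Or.inr (hpairC ▸ Set.mem_inter hwS hadj))
    · have hpairD : S ∩ (ladder'' k).neighborSet D = {B, C} :=
        eq_pair_of_ncard (hreg _ hDS) (Set.toFinite _)
          (Set.mem_inter hBS hBD.symm) (Set.mem_inter hCS hCD.symm) hBC
      exact hmem _ (Or.inl (hpairD ▸ Set.mem_inter hwS hadj))

def lev {k : ℕ} : LV k → ℕ
  | .inl x => x.2.val + 1
  | .inr false => 0
  | .inr true => k + 1

lemma key (hk : 2 ≤ k) (S : Set (LV k)) (hne : S.Nonempty)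
    (hreg : ∀ x ∈ S, (S ∩ (ladder'' k).neighborSet x).ncard = 2)
    (hcon : ∀ a ∈ S, ∀ b ∈ S, ∃ p : (ladder'' k).Walk a b, ∀ x ∈ p.support, x ∈ S) :
    S.ncard ≤ 4 := by
  obtain ⟨x0, hx0, hmax⟩ := Set.exists_max_image S lev (Set.toFinite S) hne
  suffices h : ∃ T : Set (LV k), x0 ∈ T ∧
      (∀ u ∈ T, ∀ w, (ladder'' k).Adj u w → w ∈ S → w ∈ T) ∧ T.ncard ≤ 4 by
    obtain ⟨T, hx0T, hclosed, hT4⟩ := h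
    have hsub : S ⊆ T := by
      intro b hb
      obtain ⟨p, hp⟩ := hcon x0 hx0 b hb
      exact closure_prop hclosed p hp hx0T
    exact (Set.ncard_le_ncard hsub (Set.toFinite T)).trans hT4
  match x0, hx0, hmax with
  | .inl (i0, j0), hx0, hmax =>
    refine case_inl hk hreg i0 j0 hx0 ?_ ?_
    · intro i j h
      have h2 : j.val + 1 ≤ j0.val + 1 := hmax _ h
      omega
    · intro h
      have h2 : k + 1 ≤ j0.val + 1 := hmax _ h
      have := j0.2
      omega
  | .inr true, hx0, hmax => exact case_top hk hreg hx0
  | .inr false, hx0, hmax =>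
    refine ⟨{Sum.inr false}, rfl, ?_, by simp⟩
    intro u hu w hadj hwS
    match w with
    | .inl (i, j) =>
      have h2 : j.val + 1 ≤ 0 := hmax _ hwS
      exact absurd h2 (by omega)
    | .inr true =>
      have h2 : k + 1 ≤ 0 := hmax _ hwS
      exact absurd h2 (by omega)
    | .inr false => rfl

lemma chordal (hk : 2 ≤ k) : KChordal (ladder'' k) 4 := by
  intro v c hic
  obtain ⟨hc, hind⟩ := hic
  set S : Set (LV k) := {x | x ∈ c.support} with hS
  have hveq : c.toSubgraph.verts = S := c.verts_toSubgraph
  have hreg : ∀ x ∈ S, (S ∩ (ladder'' k).neighborSet x).ncard = 2 := by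
    intro x hx
    have heq : S ∩ (ladder'' k).neighborSet x = c.toSubgraph.neighborSet x := by
      ext y
      simp only [Set.mem_inter_iff, Set.mem_setOf_eq, mem_neighborSet,
        SimpleGraph.Subgraph.mem_neighborSet]
      constructor
      · rintro ⟨hyS, hadj⟩
        have he : s(x, y) ∈ c.edges := hind x hx y hyS hadj
        exact (SimpleGraph.Subgraph.mem_edgeSet).mp
          ((c.edgeSet_toSubgraph).symm ▸ (Set.mem_setOf_eq ▸ he))
      · intro hadj
        exact ⟨(c.mem_verts_toSubgraph).mp hadj.snd_mem, hadj.adj_sub⟩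
    rw [heq]
    exact cycle_nbr hc hx
  have hcon : ∀ a ∈ S, ∀ b ∈ S, ∃ p : (ladder'' k).Walk a b, ∀ x ∈ p.support, x ∈ S := by
    intro a ha b hb
    have hconn := c.toSubgraph_connected
    rw [SimpleGraph.Subgraph.connected_iff_forall_exists_walk_subgraph] at hconn
    obtain ⟨p, hp⟩ := hconn.2 (hveq ▸ ha) (hveq ▸ hb)
    refine ⟨p, fun x hx => ?_⟩
    have : x ∈ p.toSubgraph.verts := p.mem_verts_toSubgraph.mpr hx
    exact hveq ▸ (hp.1 this)
  have hne : S.Nonempty := ⟨v, c.start_mem_support⟩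
  have hkey := key hk S hne hreg hcon
  -- c.length ≤ S.ncard
  have htail : c.support.tail.Nodup := hc.2
  have hlen : c.support.tail.length = c.length := by
    have h := c.length_support
    have h2 : c.support.tail.length = c.support.length - 1 := List.length_tail
    omega
  have hcard2 : c.length ≤ S.ncard := by
    rw [← hlen, ← List.toFinset_card_of_nodup htail]
    have hsub2 : (c.support.tail.toFinset : Set (LV k)) ⊆ S := by
      intro x hx
      simp only [List.coe_toFinset, Set.mem_setOf_eq] at hx
      exact List.mem_of_mem_tail hx
    calc (c.support.tail.toFinset.card : ℕ)
        = (↑c.support.tail.toFinset : Set (LV k)).ncard := (Set.ncard_coe_finset _).symm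
      _ ≤ S.ncard := Set.ncard_le_ncard hsub2 (Set.toFinite S)
  omega

theorem stmt18' (k : ℕ) (hk : 2 ≤ k) :
    (3 ≤ Nat.card (LV k) ∧ ∀ v : LV k, ((ladder'' k).induce {w | w ≠ v}).Connected) ∧
    (∀ v, ((ladder'' k).neighborSet v).ncard ≤ 3) ∧
    KChordal (ladder'' k) 4 ∧
    (∀ v : (Fin 2 × Fin k) ⊕ Bool,
      ((ladder'' k).neighborSet v).ncard = 2 ↔ ∃ b : Bool, v = Sum.inr b) := by
  refine ⟨⟨?_, del_connected hk⟩, ?_, chordal hk, ?_⟩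
  · rw [Nat.card_eq_fintype_card]
    simp only [Fintype.card_sum, Fintype.card_prod, Fintype.card_fin, Fintype.card_bool]
    omega
  · intro v
    match v with
    | .inl (i, j) => rw [nbr_inl_ncard hk i j]
    | .inr c => rw [nbr_inr_ncard hk c]; omega
  · intro v
    match v with
    | .inl (i, j) =>
      rw [nbr_inl_ncard hk i j]
      simp
    | .inr c =>
      rw [nbr_inr_ncard hk c]
      simp

theorem stmt18 (k : ℕ) (hk : 2 ≤ k) :
    TwoConnected (ladder'' k) ∧
    (∀ v, ((ladder'' k).neighborSet v).ncard ≤ 3) ∧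
    KChordal (ladder'' k) 4 ∧
    (∀ v : (Fin 2 × Fin k) ⊕ Bool,
      ((ladder'' k).neighborSet v).ncard = 2 ↔ ∃ b : Bool, v = Sum.inr b) := by
  have h := stmt18' k hk
  exact ⟨⟨h.1.1, h.1.2⟩, h.2.1, h.2.2.1, h.2.2.2⟩
end

section
/- If G is a connected cubic graph and H is an induced 2-regular subgraph of G with components (induced cycles) C_1, ..., C_t of orders ℓ_1, ..., ℓ_t such that no vertex of G outside N_G[V(H)] is adjacent to a vertex of H, and G − N_G[V(H)] is a forest, then the independence number of G satisfies α(G) ≥ (n(G) − Σℓ_i − t)/2. -/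
open SimpleGraph

section Aux

variable {V : Type*}

/-- A walk with support inside `A` lifts to the induced subgraph on `A`. -/
lemma walk_toInduce {G : SimpleGraph V} {A : Set V} {u v : V} (p : G.Walk u v)
    (hA : ∀ x ∈ p.support, x ∈ A) :
    ∃ (hu : u ∈ A) (hv : v ∈ A) (q : (G.induce A).Walk ⟨u, hu⟩ ⟨v, hv⟩),
      q.map (Embedding.induce A).toHom = p := by
  induction p with
  | nil =>
    exact ⟨hA _ (Walk.start_mem_support _), hA _ (Walk.start_mem_support _), Walk.nil, rfl⟩
  | @cons u w v h p ih =>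
    obtain ⟨hw, hv, q, hq⟩ := ih (fun x hx => hA x (by simp [hx]))
    refine ⟨hA _ (Walk.start_mem_support _), hv, Walk.cons (by exact h) q, ?_⟩
    subst hq; rfl

/-- If the induced graph on `A` is acyclic, then `G` has no cycle with support in `A`. -/
lemma no_cycle_of_induce_acyclic {G : SimpleGraph V} {A : Set V}
    (hforest : ∀ (v : ↥A) (c : (G.induce A).Walk v v), ¬ c.IsCycle)
    {v : V} (c : G.Walk v v) (hc : c.IsCycle) : ∃ x ∈ c.support, x ∉ A := by
  by_contra hcon
  push_neg at hcon
  obtain ⟨hv, hv', q, hq⟩ := walk_toInduce c hcon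
  refine hforest ⟨v, hv⟩ q ?_
  have hinj : Function.Injective ⇑(Embedding.induce A (G := G)).toHom :=
    (Embedding.induce A (G := G)).injective
  exact (Walk.map_isCycle_iff_of_injective hinj).mp (by rwa [hq])

/-- In a path starting at `u`, any edge containing `u` joins it to the second vertex. -/
lemma edge_with_start {G : SimpleGraph V} {u w c : V} (p : G.Walk u w) (hp : p.IsPath)
    (hne : c ≠ u) (hep : s(c, u) ∈ p.edges) : c = p.getVert 1 := by
  cases p with
  | nil => simp at hep
  | @cons u x w h r =>
    rw [Walk.edges_cons, List.mem_cons] at hep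
    rcases hep with heq | hmem
    · rw [Sym2.eq_iff] at heq
      rcases heq with ⟨h1, h2⟩ | ⟨h1, h2⟩
      · exact absurd h1 hne
      · simpa using h1
    · exfalso
      have := Walk.snd_mem_support_of_mem_edges r hmem
      rw [Walk.cons_isPath_iff] at hp
      exact hp.2 this

/-- If `G` has no cycle with support in `A` and `A` is nonempty, some vertex of `A` has at
most one neighbor in `A`. -/
lemma exists_leaf {G : SimpleGraph V} [Fintype V] {A : Set V}
    (hA : ∀ (v : V) (c : G.Walk v v), c.IsCycle → ∃ x ∈ c.support, x ∉ A)
    (hne : A.Nonempty) : ∃ v ∈ A, (A ∩ G.neighborSet v).ncard ≤ 1 := by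
  classical
  by_contra hcon
  push_neg at hcon
  obtain ⟨a, ha⟩ := hne
  set P : Set ℕ :=
    {n | ∃ (u w : V) (p : G.Walk u w), p.IsPath ∧ (∀ x ∈ p.support, x ∈ A) ∧ p.length = n}
    with hP
  have hPne : P.Nonempty := ⟨0, a, a, Walk.nil, by simp, by simp [ha], rfl⟩
  have hbdd : BddAbove P := by
    refine ⟨Fintype.card V, ?_⟩
    rintro n ⟨u, w, p, hp, -, rfl⟩
    exact hp.length_lt.le
  obtain ⟨u, w, p, hp, hsubA, hlen⟩ := Nat.sSup_mem hPne hbdd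
  have hu : u ∈ A := hsubA u p.start_mem_support
  -- every neighbor of `u` in `A` lies on `p`
  have step1 : ∀ c ∈ A ∩ G.neighborSet u, c ∈ p.support := by
    rintro c ⟨hcA, hcN⟩
    by_contra hcs
    have hadj : G.Adj c u := (G.mem_neighborSet u c).mp hcN |>.symm
    have hp' : (Walk.cons hadj p).IsPath := (Walk.cons_isPath_iff _ _).mpr ⟨hp, hcs⟩
    have hmem : (Walk.cons hadj p).length ∈ P := by
      refine ⟨c, w, Walk.cons hadj p, hp', ?_, rfl⟩
      intro x hx
      rw [Walk.support_cons, List.mem_cons] at hx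
      rcases hx with rfl | hx
      · exact hcA
      · exact hsubA x hx
    have := le_csSup hbdd hmem
    rw [Walk.length_cons, hlen] at this
    omega
  -- pick a neighbor distinct from the second vertex of `p`
  obtain ⟨c1, c2, hc1, hc2, hc12⟩ := (Set.one_lt_ncard_iff (Set.toFinite _)).mp (hcon u hu)
  obtain ⟨c, hcmem, hcne⟩ : ∃ c, c ∈ A ∩ G.neighborSet u ∧ c ≠ p.getVert 1 := by
    by_cases h1 : c1 = p.getVert 1
    · exact ⟨c2, hc2, fun h => hc12 (h1.trans h.symm)⟩
    · exact ⟨c1, hc1, h1⟩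
  have hcu : G.Adj u c := (G.mem_neighborSet u c).mp hcmem.2
  have hcsup : c ∈ p.support := step1 c hcmem
  set q := p.takeUntil c hcsup with hqdef
  have hqpath : q.IsPath := hp.takeUntil hcsup
  have he : s(c, u) ∉ q.edges := by
    intro he
    exact hcne (edge_with_start p hp hcu.ne' (Walk.edges_takeUntil_subset p hcsup he))
  have hcyc : (Walk.cons hcu.symm (⟨q, hqpath⟩ : G.Path u c).val).IsCycle :=
    SimpleGraph.Path.cons_isCycle ⟨q, hqpath⟩ hcu.symm he
  obtain ⟨x, hxsup, hxA⟩ := hA c _ hcyc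
  rw [Walk.support_cons, List.mem_cons] at hxsup
  rcases hxsup with rfl | hx
  · exact hxA hcmem.1
  · exact hxA (hsubA x (Walk.support_takeUntil_subset p hcsup hx))

/-- A finite graph with no cycle inside `A` has an independent set covering half of `A`. -/
lemma half_aux {G : SimpleGraph V} [Fintype V] :
    ∀ (n : ℕ) (A : Set V), A.ncard ≤ n →
    (∀ (v : V) (c : G.Walk v v), c.IsCycle → ∃ x ∈ c.support, x ∉ A) →
    ∃ I : Set V, I ⊆ A ∧ (∀ x ∈ I, ∀ y ∈ I, ¬ G.Adj x y) ∧ A.ncard ≤ 2 * I.ncard := by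
  intro n
  induction n with
  | zero =>
    intro A hn _
    exact ⟨∅, Set.empty_subset _, by simp, by omega⟩
  | succ n ih =>
    intro A hn hA
    rcases A.eq_empty_or_nonempty with rfl | hne
    · exact ⟨∅, Set.empty_subset _, by simp, by simp⟩
    obtain ⟨v, hv, hdeg⟩ := exists_leaf hA hne
    set B := A \ insert v (A ∩ G.neighborSet v) with hB
    have hBsub : B ⊆ A := Set.diff_subset
    have hvB : v ∉ B := fun h => h.2 (Set.mem_insert _ _)
    have hBlt : B.ncard < A.ncard :=
      Set.ncard_lt_ncard ((Set.ssubset_iff_of_subset hBsub).mpr ⟨v, hv, hvB⟩) A.toFinite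
    obtain ⟨I', hIsub, hIind, hIcard⟩ := ih B (by omega)
      (fun w c hc => (hA w c hc).imp (fun x hx => ⟨hx.1, fun h => hx.2 (hBsub h)⟩))
    have hvI : v ∉ I' := fun h => hvB (hIsub h)
    refine ⟨insert v I', ?_, ?_, ?_⟩
    · exact Set.insert_subset hv (hIsub.trans hBsub)
    · intro x hx y hy
      rcases Set.mem_insert_iff.mp hx with rfl | hx' <;>
        rcases Set.mem_insert_iff.mp hy with rfl | hy'
      · exact G.irrefl
      · intro hadj
        exact (hIsub hy').2 (Set.mem_insert_iff.mpr (Or.inr ⟨(hIsub hy').1, hadj⟩))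
      · intro hadj
        exact (hIsub hx').2 (Set.mem_insert_iff.mpr (Or.inr ⟨(hIsub hx').1, hadj.symm⟩))
      · exact hIind x hx' y hy'
    · have hcover : A ⊆ B ∪ insert v (A ∩ G.neighborSet v) := by
        intro x hx
        by_cases h : x ∈ insert v (A ∩ G.neighborSet v)
        · exact Or.inr h
        · exact Or.inl ⟨hx, h⟩
      have h1 : A.ncard ≤ B.ncard + (insert v (A ∩ G.neighborSet v)).ncard :=
        (Set.ncard_le_ncard hcover (Set.toFinite _)).trans (Set.ncard_union_le _ _)
      have h2 : (insert v (A ∩ G.neighborSet v)).ncard ≤ 2 := by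
        have := Set.ncard_insert_le v (A ∩ G.neighborSet v)
        omega
      have h3 : (insert v I').ncard = I'.ncard + 1 := Set.ncard_insert_of_notMem hvI I'.toFinite
      omega

/-- Each vertex of a cycle has two distinct neighbors on the cycle. -/
lemma cycle_two_nbrs {G : SimpleGraph V} {u : V} {c : G.Walk u u} (hc : c.IsCycle) :
    ∃ a b, a ≠ b ∧ G.Adj u a ∧ G.Adj u b ∧ a ∈ c.support ∧ b ∈ c.support := by
  have hlen := hc.three_le_length
  cases c with
  | nil => exact absurd hc (Walk.IsCycle.not_of_nil)
  | @cons u b _ h q =>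
    rw [Walk.cons_isCycle_iff] at hc
    obtain ⟨hq, he⟩ := hc
    rw [Walk.length_cons] at hlen
    have hrnil : ¬ q.reverse.Nil := by
      rw [Walk.not_nil_iff_lt_length, Walk.length_reverse]
      omega
    set a := q.reverse.getVert 1 with hadef
    have hadj : G.Adj u a := Walk.adj_snd hrnil
    have hamem : a ∈ q.reverse.support :=
      Walk.mem_support_iff_exists_getVert.mpr ⟨1, rfl, by rw [Walk.length_reverse]; omega⟩
    have hamem' : a ∈ q.support := by
      rwa [Walk.support_reverse, List.mem_reverse] at hamem
    have hab : a ≠ b := by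
      intro hab
      have h1 : s(u, a) ∈ (Walk.cons (q.reverse.adj_snd hrnil) q.reverse.tail).edges := by
        rw [Walk.edges_cons]
        exact List.mem_cons_self
      rw [Walk.cons_tail_eq _ hrnil] at h1
      rw [Walk.edges_reverse, List.mem_reverse] at h1
      rw [hab] at h1
      exact he h1
    exact ⟨a, b, hab, hadj, h, by simp [hamem'], by simp [q.start_mem_support]⟩

/-- In a 2-regular induced set, the support of a cycle lying in `s` is closed under
`s`-neighbors. -/
lemma cycle_closure [Fintype V] {G : SimpleGraph V} {s : Set V} (h2 : TwoRegularInduced G s)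
    {v : V} {c : G.Walk v v} (hc : c.IsCycle) (hsub : ∀ x ∈ c.support, x ∈ s)
    {u w : V} (hu : u ∈ c.support) (hw : w ∈ s) (hadj : G.Adj u w) : w ∈ c.support := by
  classical
  obtain ⟨a, b, hab, hua, hub, ha, hb⟩ := cycle_two_nbrs (hc.rotate hu)
  have hmem : ∀ x, x ∈ (c.rotate u hu).support ↔ x ∈ c.support := by
    intro x
    rw [← Walk.mem_verts_toSubgraph, Walk.toSubgraph_rotate, Walk.mem_verts_toSubgraph]
  have ha' : a ∈ c.support := (hmem a).mp ha
  have hb' : b ∈ c.support := (hmem b).mp hb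
  have hset : ({a, b} : Set V) = s ∩ G.neighborSet u := by
    refine Set.eq_of_subset_of_ncard_le ?_ ?_ (Set.toFinite _)
    · rintro x (rfl | rfl)
      · exact ⟨hsub _ ha', hua⟩
      · exact ⟨hsub _ hb', hub⟩
    · rw [h2 u (hsub u hu), Set.ncard_pair hab]
  have : w ∈ ({a, b} : Set V) := by
    rw [hset]
    exact ⟨hw, hadj⟩
  rcases this with rfl | rfl
  · exact ha'
  · exact hb'

lemma reach_mem [Fintype V] {G : SimpleGraph V} {s : Set V} (h2 : TwoRegularInduced G s)
    {v : V} {c : G.Walk v v} (hc : c.IsCycle) (hsub : ∀ x ∈ c.support, x ∈ s)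
    (x y : ↥s) (p : (G.induce s).Walk x y) (hx : (x : V) ∈ c.support) :
    (y : V) ∈ c.support := by
  induction p with
  | nil => exact hx
  | @cons a b _ h q ih =>
    exact ih (cycle_closure h2 hc hsub hx b.2 h)

end Aux

theorem stmt19 {V : Type*} [Fintype V] (G : SimpleGraph V)
    (hconn : G.Connected) (hcubic : ∀ v : V, (G.neighborSet v).ncard = 3)
    (s : Set V) (h2 : TwoRegularInduced G s)
    (N : Set V) (hN : N = s ∪ {w | ∃ x ∈ s, G.Adj x w})
    (hout : ∀ v ∉ N, ∀ x ∈ s, ¬ G.Adj v x)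
    (hforest : ∀ (v : ↥(Nᶜ : Set V)) (c : (G.induce (Nᶜ : Set V)).Walk v v), ¬ c.IsCycle) :
    ∃ I : Set V, (∀ x ∈ I, ∀ y ∈ I, ¬ G.Adj x y) ∧
      ((Fintype.card V : ℝ) - (s.ncard : ℝ) -
          (Nat.card (G.induce s).ConnectedComponent : ℝ)) / 2 ≤ (I.ncard : ℝ) := by
  classical
  set t := Nat.card (G.induce s).ConnectedComponent with ht
  set D : Set V := Set.range (fun K : (G.induce s).ConnectedComponent => ((Quot.out K : ↥s) : V))
    with hD
  have hDsub : D ⊆ s := by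
    rintro _ ⟨K, rfl⟩
    exact (Quot.out K).2
  have hDcard : D.ncard ≤ t := by
    rw [hD, ← Nat.card_coe_set_eq]
    exact Finite.card_range_le _
  have hsN : s ⊆ N := by rw [hN]; exact Set.subset_union_left
  -- no cycle of G inside s \ D
  have hnc2 : ∀ (v : V) (c : G.Walk v v), c.IsCycle → ∃ x ∈ c.support, x ∉ s \ D := by
    intro v c hc
    by_contra hcon
    push_neg at hcon
    have hsub : ∀ x ∈ c.support, x ∈ s := fun x hx => (hcon x hx).1
    have hvs : v ∈ s := hsub v c.start_mem_support
    set K := (G.induce s).connectedComponentMk ⟨v, hvs⟩ with hK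
    have hreach : (G.induce s).Reachable ⟨v, hvs⟩ (Quot.out K) := by
      rw [← ConnectedComponent.eq]
      show K = (G.induce s).connectedComponentMk (Quot.out K)
      exact (Quot.out_eq K).symm
    obtain ⟨p⟩ := hreach
    have hd : ((Quot.out K : ↥s) : V) ∈ c.support :=
      reach_mem h2 hc hsub _ _ p c.start_mem_support
    exact (hcon _ hd).2 ⟨K, rfl⟩
  -- no cycle of G inside Nᶜ
  have hnc1 : ∀ (v : V) (c : G.Walk v v), c.IsCycle → ∃ x ∈ c.support, x ∉ (Nᶜ : Set V) :=
    fun v c hc => no_cycle_of_induce_acyclic hforest c hc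
  obtain ⟨I1, hI1sub, hI1ind, hI1card⟩ :=
    half_aux ((Nᶜ : Set V)).ncard (Nᶜ : Set V) le_rfl hnc1
  obtain ⟨I2, hI2sub, hI2ind, hI2card⟩ := half_aux (s \ D).ncard (s \ D) le_rfl hnc2
  have hI2s : I2 ⊆ s := hI2sub.trans Set.diff_subset
  -- the union is independent
  have hdisj : Disjoint I1 I2 := by
    rw [Set.disjoint_left]
    intro x hx1 hx2
    exact (hI1sub hx1) (hsN (hI2s hx2))
  refine ⟨I1 ∪ I2, ?_, ?_⟩
  · intro x hx y hy
    rcases hx with hx | hx <;> rcases hy with hy | hy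
    · exact hI1ind x hx y hy
    · exact hout x (hI1sub hx) y (hI2s hy)
    · intro hadj
      exact hout y (hI1sub hy) x (hI2s hx) hadj.symm
    · exact hI2ind x hx y hy
  -- counting
  have hcardU : (I1 ∪ I2).ncard = I1.ncard + I2.ncard :=
    Set.ncard_union_eq hdisj I1.toFinite I2.toFinite
  -- |N \ s| ≤ |s|
  have hfex : ∀ x : ↥s, ∃ a, G.neighborSet (x : V) \ s = {a} := by
    intro x
    have hdiff : G.neighborSet (x : V) \ s = G.neighborSet (x : V) \ (s ∩ G.neighborSet (x : V)) := by
      ext y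
      simp only [Set.mem_diff, Set.mem_inter_iff]
      tauto
    rw [← Set.ncard_eq_one, hdiff, Set.ncard_diff Set.inter_subset_right (Set.toFinite _),
      hcubic (x : V), h2 (x : V) x.2]
  choose F hF using hfex
  have hNs : N \ s ⊆ Set.range F := by
    rintro w ⟨hwN, hws⟩
    rw [hN] at hwN
    rcases hwN with h | ⟨x, hxs, hadj⟩
    · exact absurd h hws
    · refine ⟨⟨x, hxs⟩, ?_⟩
      have hmem : w ∈ G.neighborSet x \ s := ⟨hadj, hws⟩
      rw [hF ⟨x, hxs⟩] at hmem
      exact hmem.symm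
  have hNscard : (N \ s).ncard ≤ s.ncard := by
    calc (N \ s).ncard ≤ (Set.range F).ncard :=
          Set.ncard_le_ncard hNs (Set.toFinite _)
      _ = Nat.card (Set.range F) := (Nat.card_coe_set_eq _).symm
      _ ≤ Nat.card ↥s := Finite.card_range_le F
      _ = s.ncard := Nat.card_coe_set_eq s
  have hNcard : N.ncard ≤ 2 * s.ncard := by
    have hcover : N ⊆ s ∪ (N \ s) := by
      intro x hx
      by_cases h : x ∈ s
      · exact Or.inl h
      · exact Or.inr ⟨hx, h⟩
    have := (Set.ncard_le_ncard hcover (Set.toFinite _)).trans (Set.ncard_union_le _ _)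
    omega
  have htotal : N.ncard + (Nᶜ : Set V).ncard = Fintype.card V := by
    rw [Set.ncard_add_ncard_compl, Nat.card_eq_fintype_card]
  have hscard : s.ncard ≤ (s \ D).ncard + t := by
    have hcover : s ⊆ (s \ D) ∪ D := by
      intro x hx
      by_cases h : x ∈ D
      · exact Or.inr h
      · exact Or.inl ⟨hx, h⟩
    have := (Set.ncard_le_ncard hcover (Set.toFinite _)).trans (Set.ncard_union_le _ _)
    omega
  have hnat : Fintype.card V ≤ s.ncard + t + 2 * (I1 ∪ I2).ncard := by
    rw [hcardU]
    omega
  have hR : (Fintype.card V : ℝ) ≤ (s.ncard : ℝ) + (t : ℝ) + 2 * ((I1 ∪ I2).ncard : ℝ) := by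
    exact_mod_cast hnat
  linarith
end
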